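/- Fix an integer a ≥ 2 and let p/q ∈ (0, a) be a rational number whose canonical continued fraction expansion is [a_0; a_1, …, a_n] with every partial quotient a_i ≤ a − 1. Define the attraction basin 𝒜_a(p/q) = {x ∈ [0, a) : r_a^k(x) = p/q for some integer k ≥ 0}, where r_a^k denotes the k-fold iterate of r_a. Then the supremum and the infimum of 𝒜_a(p/q) are quadratic irrationals; precisely, they are the two real numbers with eventually periodic continued fraction expansions [a_0; a_1, …, a_n, a−1, 1, a−1, 1, …] and [a_0; a_1, …, a_n − 1, 1, a−1, 1, a−1, 1, …] (the block (a−1, 1) repeated indefinitely), one of these being the supremum and the other the infimum. -/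

import Mathlib

/-- One step of the Gauss continued-fraction algorithm (returns `0` upon termination). -/
noncomputable def cfStep (y : ℝ) : ℝ := if Int.fract y = 0 then 0 else (Int.fract y)⁻¹

/-- Iterates of the Gauss map used to compute the canonical continued fraction of `x`. -/
noncomputable def cfIter (x : ℝ) : ℕ → ℝ
  | 0 => x
  | n + 1 => cfStep (cfIter x n)

/-- The `n`-th partial quotient of the canonical continued fraction expansion of `x`
(by convention it is `0` past the end of a finite expansion). -/
noncomputable def pquot (x : ℝ) (n : ℕ) : ℤ := ⌊cfIter x n⌋

/-- Value of a finite continued fraction `[a₀; a₁, …, aₙ]`. -/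
noncomputable def cfEval : List ℤ → ℝ
  | [] => 0
  | [a] => (a : ℝ)
  | a :: l => (a : ℝ) + (cfEval l)⁻¹

/-- The canonical continued fraction expansion of `x` is exactly `[A 0; A 1, …, A n]`. -/
def IsCanonCF (x : ℝ) (A : ℕ → ℤ) (n : ℕ) : Prop :=
  (∀ i ≤ n, pquot x i = A i) ∧ Int.fract (cfIter x n) = 0 ∧ ∀ i < n, Int.fract (cfIter x i) ≠ 0

/-- The `n`-th convergent `pₙ/qₙ = [x₀; x₁, …, xₙ]` of `x`. -/
noncomputable def cfConv (x : ℝ) (n : ℕ) : ℝ := cfEval ((List.range (n + 1)).map (pquot x))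

open scoped Classical in
/-- The resolution map `r_a`: truncate the canonical continued fraction expansion just
before the first partial quotient `xᵢ` (`i ≥ 1`) with `xᵢ ≥ a`; identity otherwise. -/
noncomputable def ra (a : ℕ) (x : ℝ) : ℝ :=
  if h : ∃ i, 1 ≤ i ∧ (a : ℤ) ≤ pquot x i then
    cfEval ((List.range (Nat.find h)).map (pquot x))
  else x

/-- The locking zone `Z_a(r) = {x ∈ [0, a) : r_a(x) = r}`. -/
noncomputable def lockZone (a : ℕ) (r : ℝ) : Set ℝ :=
  {x | x ∈ Set.Ico (0 : ℝ) (a : ℝ) ∧ ra a x = r}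

/-- Right boundary `ν⁺` of a locking zone. -/
noncomputable def nuPlus (a : ℕ) (r : ℝ) : ℝ := sSup (lockZone a r)

/-- Left boundary `ν⁻` of a locking zone. -/
noncomputable def nuMinus (a : ℕ) (r : ℝ) : ℝ := sInf (lockZone a r)

namespace S12

/-- value of the continued fraction `[d j; d (j+1), …, d (j+q-1), w]`. -/
noncomputable def tv (d : ℕ → ℤ) (w : ℝ) : ℕ → ℕ → ℝ
  | _, 0 => w
  | j, q+1 => (d j : ℝ) + (tv d w (j+1) q)⁻¹

@[simp] lemma tv_zero (d : ℕ → ℤ) (w : ℝ) (j : ℕ) : tv d w j 0 = w := rfl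
lemma tv_succ (d : ℕ → ℤ) (w : ℝ) (j q : ℕ) :
    tv d w j (q+1) = (d j : ℝ) + (tv d w (j+1) q)⁻¹ := rfl

lemma tv_comp (d : ℕ → ℤ) (w : ℝ) (p : ℕ) : ∀ (j q : ℕ),
    tv d w j (p + q) = tv d (tv d w (j+p) q) j p := by
  induction p with
  | zero => intro j q; simp [Nat.zero_add]
  | succ p ih =>
    intro j q
    have h1 : p + 1 + q = (p + q) + 1 := by omega
    rw [h1, tv_succ, tv_succ, ih (j+1) q]
    ring_nf

lemma one_lt_tv {d : ℕ → ℤ} {w : ℝ} (hw : 1 < w) :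
    ∀ (q j : ℕ), (∀ m, j ≤ m → 1 ≤ d m) → 1 < tv d w j q := by
  intro q
  induction q with
  | zero => intro j _; simpa using hw
  | succ q ih =>
    intro j hd
    have h1 : 1 < tv d w (j+1) q := ih (j+1) (fun m hm => hd m (by omega))
    have h2 : (0:ℝ) < (tv d w (j+1) q)⁻¹ := inv_pos.2 (by linarith)
    have h3 : (1:ℝ) ≤ (d j : ℝ) := by exact_mod_cast hd j le_rfl
    rw [tv_succ]; linarith

lemma tv_dist {d : ℕ → ℤ} {u v : ℝ} (hu : 1 < u) (hv : 1 < v) :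
    ∀ (q j : ℕ), (∀ m, j < m → 1 ≤ d m) →
    |tv d u j q - tv d v j q| ≤ |u - v| := by
  intro q
  induction q with
  | zero => intro j _; simp
  | succ q ih =>
    intro j hd
    set U := tv d u (j+1) q with hU
    set V := tv d v (j+1) q with hV
    have hU1 : 1 < U := one_lt_tv hu q (j+1) (fun m hm => hd m (by omega))
    have hV1 : 1 < V := one_lt_tv hv q (j+1) (fun m hm => hd m (by omega))
    have hUV : 1 ≤ U * V := by nlinarith
    have key : |U⁻¹ - V⁻¹| ≤ |U - V| := by
      have hUp : (0:ℝ) < U := by linarith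
      have hVp : (0:ℝ) < V := by linarith
      have : U⁻¹ - V⁻¹ = (V - U) / (U * V) := by field_simp
      rw [this, abs_div, abs_of_pos (by positivity : (0:ℝ) < U * V)]
      rw [div_le_iff₀ (by positivity)]
      rw [abs_sub_comm]
      nlinarith [abs_nonneg (U - V)]
    have ihq := ih (j+1) (fun m hm => hd m (by omega))
    rw [tv_succ, tv_succ]
    have h4 : (d j : ℝ) + U⁻¹ - ((d j : ℝ) + V⁻¹) = U⁻¹ - V⁻¹ := by ring
    rw [h4]
    exact le_trans key (le_trans ihq le_rfl)

lemma tv_congr {d d' : ℕ → ℤ} {w : ℝ} :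
    ∀ (q j : ℕ), (∀ m, j ≤ m → m < j + q → d m = d' m) → tv d w j q = tv d' w j q := by
  intro q
  induction q with
  | zero => intro j _; rfl
  | succ q ih =>
    intro j h
    rw [tv_succ, tv_succ, h j le_rfl (by omega), ih (j+1) (fun m h1 h2 => h m (by omega) (by omega))]


/-! ### floor/fract/cfStep of `c + u⁻¹` -/

lemma floor_add_inv (c : ℤ) {u : ℝ} (hu : 1 < u) : ⌊(c:ℝ) + u⁻¹⌋ = c := by
  have h1 : (0:ℝ) < u⁻¹ := inv_pos.2 (by linarith)
  have h2 : u⁻¹ < 1 := inv_lt_one_of_one_lt₀ hu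
  rw [Int.floor_intCast_add]
  have : ⌊u⁻¹⌋ = 0 := Int.floor_eq_zero_iff.2 ⟨le_of_lt h1, h2⟩
  omega

lemma fract_add_inv (c : ℤ) {u : ℝ} (hu : 1 < u) : Int.fract ((c:ℝ) + u⁻¹) = u⁻¹ := by
  have h1 : (0:ℝ) < u⁻¹ := inv_pos.2 (by linarith)
  have h2 : u⁻¹ < 1 := inv_lt_one_of_one_lt₀ hu
  rw [Int.fract_intCast_add, Int.fract_eq_self.2 ⟨le_of_lt h1, h2⟩]

lemma cfStep_add_inv (c : ℤ) {u : ℝ} (hu : 1 < u) : cfStep ((c:ℝ) + u⁻¹) = u := by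
  have h1 : (0:ℝ) < u⁻¹ := inv_pos.2 (by linarith)
  rw [cfStep, fract_add_inv c hu, if_neg (by positivity), inv_inv]

lemma cfStep_zero_of {y : ℝ} (h : Int.fract y = 0) : cfStep y = 0 := by
  rw [cfStep, if_pos h]

/-- chains compute `cfIter`. -/
lemma chain_iter {z : ℝ} {d : ℕ → ℤ} {R : ℕ → ℝ} {p : ℕ} (h0 : R 0 = z)
    (hrec : ∀ j, j < p → R j = (d j : ℝ) + (R (j+1))⁻¹) (hgt : ∀ j, j < p → 1 < R (j+1)) :
    ∀ j, j ≤ p → cfIter z j = R j := by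
  intro j
  induction j with
  | zero => intro _; rw [cfIter]; exact h0.symm
  | succ j ih =>
    intro hj
    have hj' : j < p := by omega
    rw [cfIter, ih (by omega), hrec j hj', cfStep_add_inv _ (hgt j hj')]

lemma chain_pquot {z : ℝ} {d : ℕ → ℤ} {R : ℕ → ℝ} {p : ℕ} (h0 : R 0 = z)
    (hrec : ∀ j, j < p → R j = (d j : ℝ) + (R (j+1))⁻¹) (hgt : ∀ j, j < p → 1 < R (j+1)) :
    ∀ j, j < p → pquot z j = d j := by
  intro j hj
  rw [pquot, chain_iter h0 hrec hgt j (by omega), hrec j hj, floor_add_inv _ (hgt j hj)]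

lemma chain_fract_ne {z : ℝ} {d : ℕ → ℤ} {R : ℕ → ℝ} {p : ℕ} (h0 : R 0 = z)
    (hrec : ∀ j, j < p → R j = (d j : ℝ) + (R (j+1))⁻¹) (hgt : ∀ j, j < p → 1 < R (j+1)) :
    ∀ j, j < p → Int.fract (cfIter z j) ≠ 0 := by
  intro j hj
  rw [chain_iter h0 hrec hgt j (by omega), hrec j hj, fract_add_inv _ (hgt j hj)]
  have : (0:ℝ) < (R (j+1))⁻¹ := inv_pos.2 (by have := hgt j hj; linarith)
  positivity

/-- past a zero fract, all iterates vanish -/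
lemma iter_zero_after {z : ℝ} {j : ℕ} (h : Int.fract (cfIter z j) = 0) :
    ∀ m, j < m → cfIter z m = 0 := by
  intro m hm
  induction m with
  | zero => omega
  | succ m ih =>
    rcases Nat.lt_or_ge j m with h1 | h1
    · rw [cfIter, ih h1, cfStep_zero_of (by simp [Int.fract_zero])]
    · have : m = j := by omega
      subst this
      rw [cfIter, cfStep_zero_of h]

/-! ### the quadratic irrational `t = [a-1; 1, a-1, 1, …]` -/

noncomputable def tt (a : ℕ) : ℝ := (((a:ℝ)-1) + Real.sqrt (((a:ℝ)-1)^2 + 4*((a:ℝ)-1)))/2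

section ttFacts

variable {a : ℕ}

lemma haR (ha : 2 ≤ a) : (2:ℝ) ≤ (a:ℝ) := by exact_mod_cast ha

lemma haD (ha : 2 ≤ a) : (0:ℝ) ≤ ((a:ℝ)-1)^2 + 4*((a:ℝ)-1) := by nlinarith [haR ha]

lemma tt_sq (ha : 2 ≤ a) : tt a ^ 2 = ((a:ℝ)-1) * (tt a + 1) := by
  have h := Real.sq_sqrt (haD ha)
  rw [tt]
  nlinarith [h]

lemma tt_gt (ha : 2 ≤ a) : (a:ℝ) - 1 < tt a := by
  have h : ((a:ℝ)-1) < Real.sqrt (((a:ℝ)-1)^2 + 4*((a:ℝ)-1)) := by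
    have h0 : (0:ℝ) ≤ (a:ℝ) - 1 := by nlinarith [haR ha]
    have h1 : Real.sqrt (((a:ℝ)-1)^2) < Real.sqrt (((a:ℝ)-1)^2 + 4*((a:ℝ)-1)) := by
      apply Real.sqrt_lt_sqrt (by positivity)
      nlinarith [haR ha]
    rwa [Real.sqrt_sq h0] at h1
  rw [tt]; linarith

lemma tt_lt (ha : 2 ≤ a) : tt a < (a:ℝ) := by
  have h : Real.sqrt (((a:ℝ)-1)^2 + 4*((a:ℝ)-1)) < (a:ℝ) + 1 := by
    rw [show ((a:ℝ)+1) = Real.sqrt (((a:ℝ)+1)^2) by rw [Real.sqrt_sq (by nlinarith [haR ha])]]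
    apply Real.sqrt_lt_sqrt (haD ha)
    nlinarith [haR ha]
  rw [tt]; linarith

lemma one_lt_tt (ha : 2 ≤ a) : 1 < tt a := by
  have := tt_gt ha; have := haR ha; linarith

lemma tt_pos (ha : 2 ≤ a) : 0 < tt a := by have := one_lt_tt ha; linarith

/-- `t = (a-1) + 1/(1 + 1/t)` -/
lemma tt_fix (ha : 2 ≤ a) : tt a = ((a:ℝ)-1) + (1 + (tt a)⁻¹)⁻¹ := by
  have h1 := one_lt_tt ha
  have h2 := tt_sq ha
  have hne : tt a ≠ 0 := by linarith
  field_simp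
  nlinarith [h2]

lemma ts_lt_two (ha : 2 ≤ a) : 1 + (tt a)⁻¹ < 2 := by
  have h1 := one_lt_tt ha
  have : (tt a)⁻¹ < 1 := inv_lt_one_of_one_lt₀ h1
  linarith

lemma one_lt_ts (ha : 2 ≤ a) : 1 < 1 + (tt a)⁻¹ := by
  have h1 := one_lt_tt ha
  have : (0:ℝ) < (tt a)⁻¹ := inv_pos.2 (by linarith)
  linarith

lemma tt_irr (ha : 2 ≤ a) : Irrational (tt a) := by
  obtain ⟨b, rfl⟩ : ∃ b : ℕ, a = b + 2 := ⟨a - 2, by omega⟩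
  set N : ℕ := (b+1)^2 + 4*(b+1) with hN
  have hcast : (((b+2:ℕ):ℝ)-1)^2 + 4*(((b+2:ℕ):ℝ)-1) = (N:ℝ) := by
    simp only [hN]; push_cast; ring
  have hsq : ¬ IsSquare N := by
    rintro ⟨k, hk⟩
    have hk' : ((b:ℤ)+1)^2 + 4*((b:ℤ)+1) = (k:ℤ)*(k:ℤ) := by
      have : (N:ℤ) = ((k:ℤ))*((k:ℤ)) := by exact_mod_cast congrArg (fun m : ℕ => (m:ℤ)) hk
      simp only [hN] at this
      push_cast at this
      linarith
    have hB : (0:ℤ) ≤ (b:ℤ) := Int.natCast_nonneg b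
    have hkn : (0:ℤ) ≤ (k:ℤ) := Int.natCast_nonneg k
    rcases le_or_gt ((k:ℤ)) ((b:ℤ)+2) with h | h
    · nlinarith [mul_self_le_mul_self hkn h]
    · have h' : (b:ℤ)+3 ≤ (k:ℤ) := by omega
      nlinarith [mul_self_le_mul_self (by linarith : (0:ℤ) ≤ (b:ℤ)+3) h']
  have hirr : Irrational (Real.sqrt N) := irrational_sqrt_natCast_iff.2 hsq
  rw [tt, hcast]
  rintro ⟨q, hq⟩
  apply hirr
  refine ⟨2*q - ((b:ℚ)+1), ?_⟩
  push_cast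
  push_cast at hq
  linarith

end ttFacts

/-! ### `cfEval` of a range-map equals `tv` -/

lemma cfEval_cons_cons (c : ℤ) (l : List ℤ) (hl : l ≠ []) :
    cfEval (c :: l) = (c : ℝ) + (cfEval l)⁻¹ := by
  match l with
  | [] => exact absurd rfl hl
  | b :: L => rfl

lemma cfEval_range (f : ℕ → ℤ) :
    ∀ q j, cfEval ((List.range (q+1)).map (fun m => f (j + m))) = tv f ((f (j + q) : ℝ)) j q := by
  intro q
  induction q with
  | zero => intro j; simp [cfEval, tv]
  | succ q ih =>
    intro j
    rw [List.range_succ_eq_map]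
    simp only [List.map_cons, List.map_map]
    have hne : (List.range (q+1)).map ((fun m => f (j + m)) ∘ Nat.succ) ≠ [] := by
      simp [List.range_succ_eq_map]
    rw [cfEval_cons_cons _ _ hne]
    have hfun : ((fun m => f (j + m)) ∘ Nat.succ) = (fun m => f ((j+1) + m)) := by
      funext m; simp only [Function.comp]; congr 1; omega
    rw [hfun, ih (j+1), tv_succ, show j+1+q = j+(q+1) from by omega,
      show j+0 = j from by omega]

open scoped Classical in
lemma ra_pos {a : ℕ} {z : ℝ} (h : ∃ i, 1 ≤ i ∧ (a : ℤ) ≤ pquot z i) :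
    ra a z = cfEval ((List.range (Nat.find h)).map (pquot z)) := by
  rw [ra, dif_pos h]

lemma ra_neg {a : ℕ} {z : ℝ} (h : ¬ ∃ i, 1 ≤ i ∧ (a : ℤ) ≤ pquot z i) :
    ra a z = z := by
  rw [ra, dif_neg h]

lemma ra_int {a : ℕ} (ha : 2 ≤ a) (c : ℤ) : ra a ((c:ℝ)) = c := by
  apply ra_neg
  rintro ⟨i, hi1, hi2⟩
  have h0 : Int.fract (cfIter (c:ℝ) 0) = 0 := by
    rw [cfIter]; exact Int.fract_intCast c
  have : cfIter (c:ℝ) i = 0 := iter_zero_after h0 i (by omega)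
  rw [pquot, this] at hi2
  simp at hi2
  omega

/-! ### facts about the canonical expansion of `x` -/

section xFacts

variable {x : ℝ} {A : ℕ → ℤ} {n : ℕ}

lemma xf_step (hA : IsCanonCF x A n) {j : ℕ} (hj : j < n) :
    cfIter x j = (A j : ℝ) + (cfIter x (j+1))⁻¹ ∧ 1 < cfIter x (j+1) := by
  have hfr : Int.fract (cfIter x j) ≠ 0 := hA.2.2 j hj
  have hfr0 : 0 < Int.fract (cfIter x j) :=
    lt_of_le_of_ne (Int.fract_nonneg _) (Ne.symm hfr)
  have hfr1 : Int.fract (cfIter x j) < 1 := Int.fract_lt_one _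
  have hstep : cfIter x (j+1) = (Int.fract (cfIter x j))⁻¹ := by
    rw [cfIter, cfStep, if_neg hfr]
  have hgt : 1 < cfIter x (j+1) := by
    rw [hstep]
    exact (one_lt_inv₀ hfr0).2 hfr1
  refine ⟨?_, hgt⟩
  have h1 : (⌊cfIter x j⌋ : ℝ) + Int.fract (cfIter x j) = cfIter x j := Int.floor_add_fract _
  have h2 : Int.fract (cfIter x j) = (cfIter x (j+1))⁻¹ := by rw [hstep, inv_inv]
  have h3 : ⌊cfIter x j⌋ = A j := hA.1 j (by omega)
  rw [← h3, ← h2]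
  linarith

lemma xf_last (hA : IsCanonCF x A n) : cfIter x n = ((A n : ℝ)) := by
  have h := hA.2.1
  have h2 := Int.floor_add_fract (cfIter x n)
  rw [h, add_zero] at h2
  rw [← h2, ← hA.1 n le_rfl, pquot]

lemma xf_one_lt (hA : IsCanonCF x A n) {j : ℕ} (h1 : 1 ≤ j) (h2 : j ≤ n) : 1 < cfIter x j := by
  obtain ⟨j, rfl⟩ : ∃ m, j = m + 1 := ⟨j - 1, by omega⟩
  exact (xf_step hA (by omega)).2

lemma xf_digit_ge (hA : IsCanonCF x A n) {j : ℕ} (h1 : 1 ≤ j) (h2 : j ≤ n) : 1 ≤ A j := by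
  have h := xf_one_lt hA h1 h2
  have h3 : pquot x j = A j := hA.1 j h2
  rw [← h3, pquot, Int.le_floor]
  push_cast; linarith

lemma xf_last_ge (hA : IsCanonCF x A n) (hn : 1 ≤ n) : 2 ≤ A n := by
  have h := xf_one_lt hA hn le_rfl
  rw [xf_last hA] at h
  exact_mod_cast h

lemma xf_A0 (hA : IsCanonCF x A n) (hx0 : 0 < x) : 0 ≤ A 0 := by
  have : (0:ℤ) ≤ ⌊x⌋ := Int.le_floor.2 (by push_cast; linarith)
  rw [← hA.1 0 (by omega), pquot, cfIter]; exact this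

lemma xf_A0' (hA : IsCanonCF x A n) (hx0 : 0 < x) (hn : n = 0) : 1 ≤ A 0 := by
  subst hn
  have h := xf_last hA
  rw [show cfIter x 0 = x from rfl] at h
  have : (0:ℝ) < (A 0 : ℝ) := by rw [← h]; exact hx0
  exact_mod_cast this

lemma xf_tv (hA : IsCanonCF x A n) :
    ∀ q j, j + q = n → cfIter x j = tv A ((A n : ℝ)) j q := by
  intro q
  induction q with
  | zero => intro j hj; rw [tv_zero, show j = n from by omega]; exact xf_last hA
  | succ q ih =>
    intro j hj
    have h := xf_step hA (show j < n by omega)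
    rw [tv_succ, h.1, ih (j+1) (by omega)]

lemma xf_val (hA : IsCanonCF x A n) : x = tv A ((A n : ℝ)) 0 n := by
  have := xf_tv hA n 0 (by omega)
  rw [← this]; rfl

end xFacts

/-! ### the digit patterns of `y₁` and `y₂` -/

def dP (a n : ℕ) (A : ℕ → ℤ) : ℕ → ℤ :=
  fun i => if i ≤ n then A i else if Odd (i - n) then (a:ℤ) - 1 else 1

def d2 (a n : ℕ) (A : ℕ → ℤ) : ℕ → ℤ :=
  fun i => if i < n then A i else if i = n then A n - 1 else if i = n + 1 then 1
    else if Even (i - n) then (a:ℤ) - 1 else 1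

lemma dP_pat (a n : ℕ) (A : ℕ → ℤ) :
    ∀ m, dP a n A (n+1 + 2*m) = (a:ℤ)-1 ∧ dP a n A (n+1 + 2*m + 1) = 1 := by
  intro m
  constructor
  · rw [dP]
    rw [if_neg (by omega), if_pos (by rw [show n+1+2*m - n = 2*m+1 from by omega]; exact ⟨m, by omega⟩)]
  · rw [dP]
    rw [if_neg (by omega), if_neg (by rw [show n+1+2*m+1 - n = 2*m+2 from by omega]; rintro ⟨k, hk⟩; omega)]

lemma d2_pat (a n : ℕ) (A : ℕ → ℤ) :
    ∀ m, d2 a n A (n+2 + 2*m) = (a:ℤ)-1 ∧ d2 a n A (n+2 + 2*m + 1) = 1 := by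
  intro m
  constructor
  · rw [d2]
    rw [if_neg (by omega), if_neg (by omega), if_neg (by omega),
      if_pos (by rw [show n+2+2*m - n = 2*m+2 from by omega]; exact ⟨m+1, by omega⟩)]
  · rw [d2]
    rw [if_neg (by omega), if_neg (by omega), if_neg (by omega),
      if_neg (by rw [show n+2+2*m+1 - n = 2*m+3 from by omega]; rintro ⟨k, hk⟩; omega)]

/-! ### periodic-tail contraction -/

lemma per_contract {a : ℕ} (ha : 2 ≤ a) {d : ℕ → ℤ} {j0 : ℕ}
    (hpat : ∀ m, d (j0 + 2*m) = (a:ℤ)-1 ∧ d (j0 + 2*m + 1) = 1) :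
    ∀ k (w : ℝ), 1 ≤ w →
      1 ≤ tv d w j0 (2*k) ∧ |tv d w j0 (2*k) - tt a| ≤ (1/4)^k * |w - tt a| := by
  intro k
  induction k with
  | zero => intro w hw; constructor
            · simpa using hw
            · simp
  | succ k ih =>
    intro w hw
    have h2 : 2*(k+1) = 2*k + 2 := by omega
    have hcomp : tv d w j0 (2*(k+1)) = tv d (tv d w (j0 + 2*k) 2) j0 (2*k) := by
      rw [h2, tv_comp]
    have hg : tv d w (j0 + 2*k) 2 = ((a:ℝ)-1) + (1 + w⁻¹)⁻¹ := by
      rw [tv_succ, tv_succ, tv_zero, (hpat k).1]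
      have : d (j0 + 2*k + 1) = 1 := (hpat k).2
      rw [this]
      push_cast
      ring
    set g := tv d w (j0 + 2*k) 2 with hgdef
    have hwpos : (0:ℝ) < w := by linarith
    have hw1 : (0:ℝ) < w⁻¹ := inv_pos.2 hwpos
    have htpos := tt_pos ha
    have ht1 := one_lt_tt ha
    have hg1 : 1 ≤ g := by
      rw [hg]
      have : (0:ℝ) < (1 + w⁻¹)⁻¹ := by positivity
      have := haR ha
      linarith
    have hcontr : |g - tt a| ≤ (1/4) * |w - tt a| := by
      have hfix := tt_fix ha
      have hinvw : (1 + w⁻¹)⁻¹ = w/(w+1) := by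
        rw [eq_div_iff (by positivity)]
        field_simp
      have hinvt : (1 + (tt a)⁻¹)⁻¹ = tt a/(tt a+1) := by
        rw [eq_div_iff (by positivity)]
        field_simp
      have he : g - tt a = (w - tt a) / ((w+1) * (tt a + 1)) := by
        rw [hg]
        have hstep : ((a:ℝ)-1) + (1+w⁻¹)⁻¹ - tt a = (1+w⁻¹)⁻¹ - (1+(tt a)⁻¹)⁻¹ := by
          linarith [hfix]
        rw [hstep, hinvw, hinvt]
        rw [div_sub_div _ _ (by positivity) (by positivity)]
        rw [div_eq_div_iff (by positivity) (by positivity)]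
        ring
      rw [he, abs_div, abs_of_pos (by positivity : (0:ℝ) < (w+1)*(tt a + 1))]
      rw [div_le_iff₀ (by positivity)]
      have h4 : (4:ℝ) ≤ (w+1)*(tt a+1) := by nlinarith
      nlinarith [abs_nonneg (w - tt a)]
    have ihg := ih g hg1
    constructor
    · rw [hcomp]
      exact (ih g hg1).1
    · rw [hcomp]
      calc |tv d g j0 (2*k) - tt a| ≤ (1/4)^k * |g - tt a| := (ih g hg1).2
        _ ≤ (1/4)^k * ((1/4) * |w - tt a|) := by
            apply mul_le_mul_of_nonneg_left hcontr (by positivity)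
        _ = (1/4)^(k+1) * |w - tt a| := by ring

lemma per_fix {a : ℕ} (ha : 2 ≤ a) {d : ℕ → ℤ} {j0 : ℕ}
    (hpat : ∀ m, d (j0 + 2*m) = (a:ℤ)-1 ∧ d (j0 + 2*m + 1) = 1) (k : ℕ) :
    tv d (tt a) j0 (2*k) = tt a := by
  have h := (per_contract ha hpat k (tt a) (le_of_lt (one_lt_tt ha))).2
  rw [sub_self, abs_zero, mul_zero] at h
  have h0 : tv d (tt a) j0 (2*k) - tt a = 0 :=
    abs_eq_zero.1 (le_antisymm h (abs_nonneg _))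
  linarith

/-! ### digit bounds -/

section digits

variable {a n : ℕ} {A : ℕ → ℤ}

lemma dP_ge1 (ha : 2 ≤ a) (hge : ∀ j, 1 ≤ j → j ≤ n → 1 ≤ A j) :
    ∀ m, 1 ≤ m → 1 ≤ dP a n A m := by
  intro m hm
  rw [dP]
  by_cases h : m ≤ n
  · rw [if_pos h]; exact hge m hm h
  · rw [if_neg h]
    by_cases h2 : Odd (m - n)
    · rw [if_pos h2]; omega
    · rw [if_neg h2]

lemma dP_bd (hbd : ∀ i ≤ n, A i ≤ (a:ℤ) - 1) (ha : 2 ≤ a) :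
    ∀ m, dP a n A m ≤ (a:ℤ) - 1 := by
  intro m
  rw [dP]
  by_cases h : m ≤ n
  · rw [if_pos h]; exact hbd m h
  · rw [if_neg h]
    by_cases h2 : Odd (m - n)
    · rw [if_pos h2]
    · rw [if_neg h2]; omega

lemma d2_ge1 (ha : 2 ≤ a) (hge : ∀ j, 1 ≤ j → j ≤ n → 1 ≤ A j)
    (hAn : 1 ≤ n → 2 ≤ A n) :
    ∀ m, 1 ≤ m → 1 ≤ d2 a n A m := by
  intro m hm
  rw [d2]
  by_cases h : m < n
  · rw [if_pos h]; exact hge m hm (by omega)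
  · rw [if_neg h]
    by_cases h2 : m = n
    · rw [if_pos h2]
      have := hAn (by omega)
      omega
    · rw [if_neg h2]
      by_cases h3 : m = n + 1
      · rw [if_pos h3]
      · rw [if_neg h3]
        by_cases h4 : Even (m - n)
        · rw [if_pos h4]; omega
        · rw [if_neg h4]

lemma d2_bd (hbd : ∀ i ≤ n, A i ≤ (a:ℤ) - 1) (ha : 2 ≤ a) :
    ∀ m, d2 a n A m ≤ (a:ℤ) - 1 := by
  intro m
  rw [d2]
  by_cases h : m < n
  · rw [if_pos h]; exact hbd m (by omega)
  · rw [if_neg h]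
    by_cases h2 : m = n
    · rw [if_pos h2]
      have := hbd n le_rfl
      omega
    · rw [if_neg h2]
      by_cases h3 : m = n + 1
      · rw [if_pos h3]; omega
      · rw [if_neg h3]
        by_cases h4 : Even (m - n)
        · rw [if_pos h4]
        · rw [if_neg h4]; omega

end digits

/-! ### the numbers `y₁` and `y₂` and their expansions -/

noncomputable def y1 (a n : ℕ) (A : ℕ → ℤ) : ℝ := tv (dP a n A) (tt a) 0 (n+1)

noncomputable def y2 (a n : ℕ) (A : ℕ → ℤ) : ℝ := tv (d2 a n A) (tt a) 0 (n+2)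

section yFacts

variable {a n : ℕ} {A : ℕ → ℤ}

lemma y1_chain (ha : 2 ≤ a) (hge : ∀ j, 1 ≤ j → j ≤ n → 1 ≤ A j) :
    (∀ i, cfIter (y1 a n A) i =
      (fun j => if j ≤ n then tv (dP a n A) (tt a) j (n+1-j)
        else if Odd (j - n) then tt a else 1 + (tt a)⁻¹) i) ∧
    ∀ i, pquot (y1 a n A) i = dP a n A i := by
  set d := dP a n A with hd
  set R : ℕ → ℝ := fun j => if j ≤ n then tv d (tt a) j (n+1-j)
    else if Odd (j - n) then tt a else 1 + (tt a)⁻¹ with hR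
  have ht1 := one_lt_tt ha
  have hts1 := one_lt_ts ha
  have hd1 : ∀ m, 1 ≤ m → 1 ≤ d m := dP_ge1 ha hge
  have hRn1 : ∀ j, j ≤ n → R j = tv d (tt a) j (n+1-j) := by
    intro j hj; simp only [hR, if_pos hj]
  have hgt : ∀ j, 1 ≤ j → 1 < R j := by
    intro j hj
    by_cases h : j ≤ n
    · rw [hRn1 j h]
      exact one_lt_tv ht1 _ j (fun m hm => hd1 m (by omega))
    · simp only [hR, if_neg h]
      by_cases h2 : Odd (j - n)
      · rw [if_pos h2]; exact ht1
      · rw [if_neg h2]; exact hts1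
  have hRsucc : ∀ j, ¬ j ≤ n → R j = if Odd (j - n) then tt a else 1 + (tt a)⁻¹ := by
    intro j hj; simp only [hR, if_neg hj]
  have hrec : ∀ j, R j = (d j : ℝ) + (R (j+1))⁻¹ := by
    intro j
    by_cases hj : j ≤ n
    · rw [hRn1 j hj, show n+1-j = (n-j)+1 from by omega, tv_succ]
      congr 1
      by_cases hj2 : j + 1 ≤ n
      · rw [hRn1 (j+1) hj2, show n+1-(j+1) = n-j from by omega]
      · have hjn : j = n := by omega
        rw [hRsucc (j+1) hj2, if_pos (by rw [show j+1-n = 1 from by omega]; exact odd_one),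
          show n - j = 0 from by omega, tv_zero]
    · rw [hRsucc j hj, hRsucc (j+1) (by omega)]
      rcases Nat.even_or_odd (j - n) with he | ho
      · have h1 : ¬ Odd (j - n) := Nat.not_odd_iff_even.2 he
        have h2 : Odd (j+1-n) := by
          rcases he with ⟨c, hc⟩
          exact ⟨c, by omega⟩
        rw [if_neg h1, if_pos h2]
        have hdj : d j = 1 := by
          rw [hd, dP]; rw [if_neg hj, if_neg h1]
        rw [hdj]
        norm_num
      · have h2 : ¬ Odd (j+1-n) := by
          rcases ho with ⟨c, hc⟩
          rintro ⟨c', hc'⟩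
          omega
        rw [if_pos ho, if_neg h2]
        have hdj : d j = (a:ℤ) - 1 := by
          rw [hd, dP]; rw [if_neg hj, if_pos ho]
        rw [hdj]
        push_cast
        exact tt_fix ha
  have h0 : R 0 = y1 a n A := by
    rw [hRn1 0 (by omega), y1, hd, show n+1-0 = n+1 from rfl]
  have hiter : ∀ i, cfIter (y1 a n A) i = R i := by
    intro i
    exact chain_iter h0 (fun j _ => hrec j) (fun j _ => hgt (j+1) (by omega)) i le_rfl
  constructor
  · exact hiter
  · intro i
    exact chain_pquot (p := i+1) h0 (fun j _ => hrec j) (fun j _ => hgt (j+1) (by omega)) i (by omega)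

lemma y2_chain (ha : 2 ≤ a) (hge : ∀ j, 1 ≤ j → j ≤ n → 1 ≤ A j)
    (hAn : 1 ≤ n → 2 ≤ A n) :
    (∀ i, cfIter (y2 a n A) i =
      (fun j => if j ≤ n+1 then tv (d2 a n A) (tt a) j (n+2-j)
        else if Even (j - n) then tt a else 1 + (tt a)⁻¹) i) ∧
    ∀ i, pquot (y2 a n A) i = d2 a n A i := by
  set d := d2 a n A with hd
  set R : ℕ → ℝ := fun j => if j ≤ n+1 then tv d (tt a) j (n+2-j)
    else if Even (j - n) then tt a else 1 + (tt a)⁻¹ with hR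
  have ht1 := one_lt_tt ha
  have hts1 := one_lt_ts ha
  have hd1 : ∀ m, 1 ≤ m → 1 ≤ d m := d2_ge1 ha hge hAn
  have hRn1 : ∀ j, j ≤ n+1 → R j = tv d (tt a) j (n+2-j) := by
    intro j hj; simp only [hR, if_pos hj]
  have hgt : ∀ j, 1 ≤ j → 1 < R j := by
    intro j hj
    by_cases h : j ≤ n+1
    · rw [hRn1 j h]
      exact one_lt_tv ht1 _ j (fun m hm => hd1 m (by omega))
    · simp only [hR, if_neg h]
      by_cases h2 : Even (j - n)
      · rw [if_pos h2]; exact ht1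
      · rw [if_neg h2]; exact hts1
  have hRsucc : ∀ j, ¬ j ≤ n+1 → R j = if Even (j - n) then tt a else 1 + (tt a)⁻¹ := by
    intro j hj; simp only [hR, if_neg hj]
  have hrec : ∀ j, R j = (d j : ℝ) + (R (j+1))⁻¹ := by
    intro j
    by_cases hj : j ≤ n+1
    · rw [hRn1 j hj, show n+2-j = (n+1-j)+1 from by omega, tv_succ]
      congr 1
      by_cases hj2 : j + 1 ≤ n+1
      · rw [hRn1 (j+1) hj2, show n+2-(j+1) = n+1-j from by omega]
      · have hjn : j = n+1 := by omega
        rw [hRsucc (j+1) hj2, if_pos (by rw [show j+1-n = 2 from by omega]; exact ⟨1, by omega⟩),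
          show n+1-j = 0 from by omega, tv_zero]
    · rw [hRsucc j hj, hRsucc (j+1) (by omega)]
      rcases Nat.even_or_odd (j - n) with he | ho
      · have h2 : ¬ Even (j+1-n) := by
          rcases he with ⟨c, hc⟩
          rintro ⟨c', hc'⟩
          omega
        rw [if_pos he, if_neg h2]
        have hdj : d j = (a:ℤ) - 1 := by
          rw [hd, d2]
          rw [if_neg (by omega), if_neg (by omega), if_neg (by omega), if_pos he]
        rw [hdj]
        push_cast
        exact tt_fix ha
      · have h1 : ¬ Even (j - n) := Nat.not_even_iff_odd.2 ho
        have h2 : Even (j+1-n) := by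
          rcases ho with ⟨c, hc⟩
          exact ⟨c+1, by omega⟩
        rw [if_neg h1, if_pos h2]
        have hdj : d j = 1 := by
          rw [hd, d2]
          rw [if_neg (by omega), if_neg (by omega), if_neg (by omega), if_neg h1]
        rw [hdj]
        norm_num
  have h0 : R 0 = y2 a n A := by
    rw [hRn1 0 (by omega), y2, hd, show n+2-0 = n+2 from rfl]
  have hiter : ∀ i, cfIter (y2 a n A) i = R i := by
    intro i
    exact chain_iter h0 (fun j _ => hrec j) (fun j _ => hgt (j+1) (by omega)) i le_rfl
  constructor
  · exact hiter
  · intro i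
    exact chain_pquot (p := i+1) h0 (fun j _ => hrec j) (fun j _ => hgt (j+1) (by omega)) i (by omega)

end yFacts

/-! ### `y₁, y₂` are quadratic irrationals -/

section quad

variable {a : ℕ}

lemma ratcoef_ne (ha : 2 ≤ a) {u v : ℚ} (hv : v ≠ 0) : (u:ℝ) + (v:ℝ) * tt a ≠ 0 := by
  intro h
  apply tt_irr ha
  refine ⟨-u/v, ?_⟩
  have hvR : (v:ℝ) ≠ 0 := by exact_mod_cast hv
  push_cast
  field_simp
  linarith

lemma tv_quad (ha : 2 ≤ a) (d : ℕ → ℤ) :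
    ∀ (q j : ℕ) (u v : ℚ), v ≠ 0 →
      ∃ u' v' : ℚ, v' ≠ 0 ∧ tv d ((u:ℝ) + (v:ℝ) * tt a) j q = (u':ℝ) + (v':ℝ) * tt a := by
  intro q
  induction q with
  | zero => intro j u v hv; exact ⟨u, v, hv, rfl⟩
  | succ q ih =>
    intro j u v hv
    obtain ⟨u', v', hv', hval⟩ := ih (j+1) u v hv
    set N : ℚ := u'^2 + ((a:ℚ)-1)*u'*v' - ((a:ℚ)-1)*v'^2 with hNdef
    have hv'R : (v':ℝ) ≠ 0 := by exact_mod_cast hv'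
    have hne : (u':ℝ) + (v':ℝ) * tt a ≠ 0 := ratcoef_ne ha hv'
    have hprod : ((u':ℝ) + (v':ℝ) * tt a) * ((u':ℝ) + ((a:ℝ)-1)*(v':ℝ) - (v':ℝ) * tt a)
        = ((N:ℚ):ℝ) := by
      have hsq := tt_sq ha
      simp only [hNdef]
      push_cast
      linear_combination (-(v':ℝ)^2) * hsq
    have hN : N ≠ 0 := by
      intro hN0
      rw [hN0] at hprod
      push_cast at hprod
      rcases mul_eq_zero.1 hprod with h | h
      · exact hne h
      · apply tt_irr ha
        refine ⟨(u' + ((a:ℚ)-1)*v')/v', ?_⟩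
        push_cast
        field_simp
        linarith
    have hNR : ((N:ℚ):ℝ) ≠ 0 := by exact_mod_cast hN
    have hmul : ((((u' + ((a:ℚ)-1)*v')/N : ℚ):ℝ) + ((-v'/N : ℚ):ℝ) * tt a)
        * ((u':ℝ) + (v':ℝ) * tt a) = 1 := by
      have hNR' : (N:ℝ) ≠ 0 := hNR
      push_cast
      field_simp
      linear_combination hprod
    have hinv : ((u':ℝ) + (v':ℝ) * tt a)⁻¹
        = (((u' + ((a:ℚ)-1)*v')/N : ℚ):ℝ) + ((-v'/N : ℚ):ℝ) * tt a :=
      (eq_inv_of_mul_eq_one_left hmul).symm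
    refine ⟨(d j : ℚ) + (u' + ((a:ℚ)-1)*v')/N, -v'/N, ?_, ?_⟩
    · simp only [ne_eq, div_eq_zero_iff, neg_eq_zero]
      push_neg
      exact ⟨hv', hN⟩
    · rw [tv_succ, hval, hinv]
      push_cast
      ring

lemma affine_irrational (ha : 2 ≤ a) {u v : ℚ} (hv : v ≠ 0) {y : ℝ}
    (hy : y = (u:ℝ) + (v:ℝ) * tt a) : Irrational y := by
  rintro ⟨q, hq⟩
  apply tt_irr ha
  refine ⟨(q - u)/v, ?_⟩
  have hvR : (v:ℝ) ≠ 0 := by exact_mod_cast hv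
  push_cast
  rw [div_eq_iff hvR]
  linarith [hq, hy]

lemma affine_quad (ha : 2 ≤ a) {u v : ℚ} (hv : v ≠ 0) {y : ℝ}
    (hy : y = (u:ℝ) + (v:ℝ) * tt a) :
    ∃ c b d : ℤ, c ≠ 0 ∧ (c : ℝ) * y ^ 2 + b * y + d = 0 := by
  set q1 : ℚ := -(2*u + ((a:ℚ)-1)*v) with hq1
  set q0 : ℚ := u^2 + ((a:ℚ)-1)*u*v - ((a:ℚ)-1)*v^2 with hq0
  have hreal : y^2 + (q1:ℝ)*y + (q0:ℝ) = 0 := by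
    have hsq := tt_sq ha
    subst hy
    simp only [hq1, hq0]
    push_cast
    linear_combination ((v:ℝ)^2) * hsq
  refine ⟨(q1.den : ℤ) * q0.den, q0.den * q1.num, q1.den * q0.num, ?_, ?_⟩
  · have h1 : q1.den ≠ 0 := q1.den_nz
    have h0 : q0.den ≠ 0 := q0.den_nz
    positivity
  · have hd1 : ((q1.den : ℤ) : ℝ) ≠ 0 := by
      have : q1.den ≠ 0 := q1.den_nz
      exact_mod_cast this
    have hd0 : ((q0.den : ℤ) : ℝ) ≠ 0 := by
      have : q0.den ≠ 0 := q0.den_nz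
      exact_mod_cast this
    have e1 : ((q1.num : ℤ) : ℝ) = (q1 : ℝ) * ((q1.den : ℤ) : ℝ) := by
      rw [Rat.cast_def]
      field_simp
      norm_cast
    have e0 : ((q0.num : ℤ) : ℝ) = (q0 : ℝ) * ((q0.den : ℤ) : ℝ) := by
      rw [Rat.cast_def]
      field_simp
      norm_cast
    push_cast
    push_cast at e1 e0
    rw [e1, e0]
    linear_combination ((q1.den:ℝ) * (q0.den:ℝ)) * hreal

end quad

/-! ### windowed bounds for `tv`, Gauss step -/

lemma one_le_tv_win {d : ℕ → ℤ} {w : ℝ} (hw : 1 ≤ w) :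
    ∀ (q j : ℕ), (∀ m, j ≤ m → m < j + q → 1 ≤ d m) → 1 ≤ tv d w j q := by
  intro q
  induction q with
  | zero => intro j _; simpa using hw
  | succ q ih =>
    intro j hd
    have h1 : 1 ≤ tv d w (j+1) q := ih (j+1) (fun m h1 h2 => hd m (by omega) (by omega))
    have h2 : (0:ℝ) < (tv d w (j+1) q)⁻¹ := inv_pos.2 (by linarith)
    have h3 : (1:ℝ) ≤ (d j : ℝ) := by exact_mod_cast hd j le_rfl (by omega)
    rw [tv_succ]; linarith

lemma one_lt_tv_win {d : ℕ → ℤ} {w : ℝ} (hw : 1 ≤ w) :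
    ∀ (q j : ℕ), 1 ≤ q → (∀ m, j ≤ m → m < j + q → 1 ≤ d m) → 1 < tv d w j q := by
  intro q j hq hd
  obtain ⟨q', rfl⟩ : ∃ q', q = q'+1 := ⟨q-1, by omega⟩
  have h1 : 1 ≤ tv d w (j+1) q' :=
    one_le_tv_win hw q' (j+1) (fun m ha hb => hd m (by omega) (by omega))
  have h2 : (0:ℝ) < (tv d w (j+1) q')⁻¹ := inv_pos.2 (by linarith)
  have h3 : (1:ℝ) ≤ (d j : ℝ) := by exact_mod_cast hd j le_rfl (by omega)
  rw [tv_succ]; linarith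

lemma gauss_step {z : ℝ} {j : ℕ} (hfr : Int.fract (cfIter z j) ≠ 0) :
    cfIter z j = ((pquot z j : ℤ):ℝ) + (cfIter z (j+1))⁻¹ ∧ 1 < cfIter z (j+1) := by
  have hfr0 : 0 < Int.fract (cfIter z j) := lt_of_le_of_ne (Int.fract_nonneg _) (Ne.symm hfr)
  have hfr1 := Int.fract_lt_one (cfIter z j)
  have hstep : cfIter z (j+1) = (Int.fract (cfIter z j))⁻¹ := by rw [cfIter, cfStep, if_neg hfr]
  have hgt : 1 < cfIter z (j+1) := by rw [hstep]; exact (one_lt_inv₀ hfr0).2 hfr1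
  refine ⟨?_, hgt⟩
  have h1 := Int.floor_add_fract (cfIter z j)
  have h2 : Int.fract (cfIter z j) = (cfIter z (j+1))⁻¹ := by rw [hstep, inv_inv]
  rw [pquot, ← h2]
  linarith

/-! ### the approach sequences `z_k → y₁`, `w_k → y₂` -/

noncomputable def zkk (a n : ℕ) (A : ℕ → ℤ) (k : ℕ) : ℝ := tv (dP a n A) ((a:ℝ)) 0 (n+1+2*k)

noncomputable def wkk (a n : ℕ) (A : ℕ → ℤ) (k : ℕ) : ℝ := tv (d2 a n A) ((a:ℝ)) 0 (n+2+2*k)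

section zw

variable {a n : ℕ} {A : ℕ → ℤ} {x : ℝ}

lemma one_lt_aR (ha : 2 ≤ a) : (1:ℝ) < (a:ℝ) := by
  have : (2:ℝ) ≤ a := by exact_mod_cast ha
  linarith

/-- full partial-quotient profile of a number `tv d (a:ℝ) 0 p` with digits `d`. -/
lemma fin_pquot (ha : 2 ≤ a) {d : ℕ → ℤ} (hd1 : ∀ m, 1 ≤ m → 1 ≤ d m) (p : ℕ) :
    (∀ j, j ≤ p → cfIter (tv d ((a:ℝ)) 0 p) j = tv d ((a:ℝ)) j (p - j)) ∧
    (∀ j, j < p → pquot (tv d ((a:ℝ)) 0 p) j = d j) ∧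
    pquot (tv d ((a:ℝ)) 0 p) p = a ∧
    ∀ m, p < m → pquot (tv d ((a:ℝ)) 0 p) m = 0 := by
  set R : ℕ → ℝ := fun j => tv d ((a:ℝ)) j (p - j) with hR
  have h0 : R 0 = tv d ((a:ℝ)) 0 p := by simp only [hR, Nat.sub_zero]
  have hrec : ∀ j, j < p → R j = (d j : ℝ) + (R (j+1))⁻¹ := by
    intro j hj
    simp only [hR]
    rw [show p - j = (p - (j+1)) + 1 from by omega, tv_succ]
  have hgt : ∀ j, j < p → 1 < R (j+1) := by
    intro j hj
    simp only [hR]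
    by_cases hq : p - (j+1) = 0
    · rw [hq, tv_zero]; exact one_lt_aR ha
    · exact one_lt_tv_win (le_of_lt (one_lt_aR ha)) _ (j+1) (by omega)
        (fun m h1 h2 => hd1 m (by omega))
  have hiter := chain_iter h0 hrec hgt
  refine ⟨hiter, chain_pquot h0 hrec hgt, ?_, ?_⟩
  · rw [pquot, hiter p le_rfl]
    simp only [hR, Nat.sub_self, tv_zero]
    exact Int.floor_natCast a
  · have hfr : Int.fract (cfIter (tv d ((a:ℝ)) 0 p) p) = 0 := by
      rw [hiter p le_rfl]
      simp only [hR, Nat.sub_self, tv_zero]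
      exact Int.fract_natCast a
    intro m hm
    rw [pquot, iter_zero_after hfr m hm]
    exact Int.floor_zero

/-- computing `ra` on such a number : it chops the last digit `a`. -/
lemma ra_fin (ha : 2 ≤ a) {d : ℕ → ℤ} (hd1 : ∀ m, 1 ≤ m → 1 ≤ d m)
    (hdbd : ∀ m, d m ≤ (a:ℤ) - 1) {p : ℕ} (hp : 1 ≤ p) :
    ra a (tv d ((a:ℝ)) 0 p) = tv d ((d (p-1) : ℝ)) 0 (p-1) := by
  obtain ⟨hiter, hpq, hpa, hafter⟩ := fin_pquot ha hd1 p
  have h : ∃ i, 1 ≤ i ∧ (a:ℤ) ≤ pquot (tv d ((a:ℝ)) 0 p) i := ⟨p, hp, by rw [hpa]⟩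
  have hfind : Nat.find h = p := by
    rw [Nat.find_eq_iff]
    refine ⟨⟨hp, by rw [hpa]⟩, ?_⟩
    intro m hm
    rintro ⟨hm1, hm2⟩
    rw [hpq m hm] at hm2
    have := hdbd m
    omega
  rw [ra_pos h, hfind]
  have hmap : (List.range p).map (pquot (tv d ((a:ℝ)) 0 p))
      = (List.range p).map (fun m => d (0 + m)) := by
    apply List.map_congr_left
    intro m hm
    rw [List.mem_range] at hm
    rw [hpq m hm]
    simp
  rw [hmap, show p = (p-1)+1 from by omega, cfEval_range]
  simp

lemma zkk_pos_step (ha : 2 ≤ a) (hge : ∀ j, 1 ≤ j → j ≤ n → 1 ≤ A j)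
    (hbd : ∀ i ≤ n, A i ≤ (a:ℤ) - 1) (k : ℕ) :
    ra a (zkk a n A (k+1)) = zkk a n A k := by
  have hd1 := dP_ge1 ha hge
  have hdbd := dP_bd hbd ha
  rw [zkk, ra_fin ha hd1 hdbd (by omega)]
  have he1 : n+1+2*(k+1) - 1 = (n+1+2*k) + 1 := by omega
  have he2 : n+1+2*(k+1) - 1 = (n+1+2*k) + 1 := he1
  rw [he1, (dP_pat a n A k).2]
  rw [show (n+1+2*k) + 1 = (n+1+2*k) + 1 from rfl]
  have hcomp : tv (dP a n A) (((1:ℤ)):ℝ) 0 ((n+1+2*k) + 1)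
      = tv (dP a n A) (tv (dP a n A) (((1:ℤ)):ℝ) (0 + (n+1+2*k)) 1) 0 (n+1+2*k) :=
    tv_comp _ _ (n+1+2*k) 0 1
  rw [hcomp]
  have hin : tv (dP a n A) (((1:ℤ)):ℝ) (0 + (n+1+2*k)) 1 = ((a:ℝ)) := by
    rw [tv_succ, tv_zero, show 0 + (n+1+2*k) = n+1+2*k from by omega, (dP_pat a n A k).1]
    push_cast
    ring
  rw [hin, zkk]

lemma zkk_zero_step (ha : 2 ≤ a) (hA : IsCanonCF x A n)
    (hge : ∀ j, 1 ≤ j → j ≤ n → 1 ≤ A j) (hbd : ∀ i ≤ n, A i ≤ (a:ℤ) - 1) :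
    ra a (zkk a n A 0) = x := by
  have hd1 := dP_ge1 ha hge
  have hdbd := dP_bd hbd ha
  rw [zkk, show n+1+2*0 = n+1 from by omega, ra_fin ha hd1 hdbd (by omega)]
  have he : n+1-1 = n := by omega
  rw [he]
  have hdn : dP a n A n = A n := by rw [dP, if_pos le_rfl]
  rw [hdn]
  rw [tv_congr n 0 (fun m h1 h2 => by rw [dP, if_pos (by omega : m ≤ n)])]
  exact (xf_val hA).symm

lemma wkk_pos_step (ha : 2 ≤ a) (hge : ∀ j, 1 ≤ j → j ≤ n → 1 ≤ A j)
    (hAn : 1 ≤ n → 2 ≤ A n) (hbd : ∀ i ≤ n, A i ≤ (a:ℤ) - 1) (k : ℕ) :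
    ra a (wkk a n A (k+1)) = wkk a n A k := by
  have hd1 := d2_ge1 ha hge hAn
  have hdbd := d2_bd hbd ha
  rw [wkk, ra_fin ha hd1 hdbd (by omega)]
  have he1 : n+2+2*(k+1) - 1 = (n+2+2*k) + 1 := by omega
  rw [he1, (d2_pat a n A k).2]
  have hcomp : tv (d2 a n A) (((1:ℤ)):ℝ) 0 ((n+2+2*k) + 1)
      = tv (d2 a n A) (tv (d2 a n A) (((1:ℤ)):ℝ) (0 + (n+2+2*k)) 1) 0 (n+2+2*k) :=
    tv_comp _ _ (n+2+2*k) 0 1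
  rw [hcomp]
  have hin : tv (d2 a n A) (((1:ℤ)):ℝ) (0 + (n+2+2*k)) 1 = ((a:ℝ)) := by
    rw [tv_succ, tv_zero, show 0 + (n+2+2*k) = n+2+2*k from by omega, (d2_pat a n A k).1]
    push_cast
    ring
  rw [hin, wkk]

lemma wkk_zero_step (ha : 2 ≤ a) (hA : IsCanonCF x A n)
    (hge : ∀ j, 1 ≤ j → j ≤ n → 1 ≤ A j) (hAn : 1 ≤ n → 2 ≤ A n)
    (hbd : ∀ i ≤ n, A i ≤ (a:ℤ) - 1) :
    ra a (wkk a n A 0) = x := by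
  have hd1 := d2_ge1 ha hge hAn
  have hdbd := d2_bd hbd ha
  rw [wkk, show n+2+2*0 = n+2 from by omega, ra_fin ha hd1 hdbd (by omega)]
  have he : n+2-1 = n+1 := by omega
  rw [he]
  have hdn1 : d2 a n A (n+1) = 1 := by
    rw [d2, if_neg (by omega), if_neg (by omega), if_pos rfl]
  rw [hdn1]
  have hcomp : tv (d2 a n A) (((1:ℤ)):ℝ) 0 (n + 1)
      = tv (d2 a n A) (tv (d2 a n A) (((1:ℤ)):ℝ) (0 + n) 1) 0 n :=
    tv_comp _ _ n 0 1
  rw [hcomp]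
  have hdn : d2 a n A n = A n - 1 := by
    rw [d2, if_neg (by omega), if_pos rfl]
  have hin : tv (d2 a n A) (((1:ℤ)):ℝ) (0 + n) 1 = ((A n : ℝ)) := by
    rw [tv_succ, tv_zero, show 0 + n = n from by omega, hdn]
    push_cast
    ring
  rw [hin]
  rw [tv_congr n 0 (fun m h1 h2 => by rw [d2, if_pos (by omega : m < n)])]
  exact (xf_val hA).symm

lemma zkk_basin (ha : 2 ≤ a) (hA : IsCanonCF x A n)
    (hge : ∀ j, 1 ≤ j → j ≤ n → 1 ≤ A j) (hbd : ∀ i ≤ n, A i ≤ (a:ℤ) - 1) :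
    ∀ k, (ra a)^[k+1] (zkk a n A k) = x := by
  intro k
  induction k with
  | zero => rw [Function.iterate_one, zkk_zero_step ha hA hge hbd]
  | succ k ih =>
    rw [Function.iterate_succ_apply, zkk_pos_step ha hge hbd k, ih]

lemma wkk_basin (ha : 2 ≤ a) (hA : IsCanonCF x A n)
    (hge : ∀ j, 1 ≤ j → j ≤ n → 1 ≤ A j) (hAn : 1 ≤ n → 2 ≤ A n)
    (hbd : ∀ i ≤ n, A i ≤ (a:ℤ) - 1) :
    ∀ k, (ra a)^[k+1] (wkk a n A k) = x := by
  intro k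
  induction k with
  | zero => rw [Function.iterate_one, wkk_zero_step ha hA hge hAn hbd]
  | succ k ih =>
    rw [Function.iterate_succ_apply, wkk_pos_step ha hge hAn hbd k, ih]

lemma fin_head_mem (ha : 2 ≤ a) {d : ℕ → ℤ} (hd1 : ∀ m, 1 ≤ m → 1 ≤ d m)
    (h0 : 0 ≤ d 0) (h0' : d 0 ≤ (a:ℤ) - 1) {p : ℕ} (hp : 1 ≤ p) :
    0 ≤ tv d ((a:ℝ)) 0 p ∧ tv d ((a:ℝ)) 0 p < (a:ℝ) := by
  obtain ⟨p', rfl⟩ : ∃ q', p = q'+1 := ⟨p-1, by omega⟩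
  rw [tv_succ]
  have hin : 1 < tv d ((a:ℝ)) 1 p' := by
    by_cases hq : p' = 0
    · rw [hq, tv_zero]; exact one_lt_aR ha
    · exact one_lt_tv_win (le_of_lt (one_lt_aR ha)) _ 1 (by omega) (fun m h1 h2 => hd1 m h1)
  have hinv0 : (0:ℝ) < (tv d ((a:ℝ)) 1 p')⁻¹ := inv_pos.2 (by linarith)
  have hinv1 : (tv d ((a:ℝ)) 1 p')⁻¹ < 1 := inv_lt_one_of_one_lt₀ hin
  have hc0 : (0:ℝ) ≤ (d 0 : ℝ) := by exact_mod_cast h0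
  have hc1 : (d 0 : ℝ) ≤ (a:ℝ) - 1 := by exact_mod_cast h0'
  constructor
  · linarith
  · linarith

lemma zkk_mem (ha : 2 ≤ a) (hA : IsCanonCF x A n) (hx0 : 0 < x)
    (hge : ∀ j, 1 ≤ j → j ≤ n → 1 ≤ A j) (hbd : ∀ i ≤ n, A i ≤ (a:ℤ) - 1) (k : ℕ) :
    0 ≤ zkk a n A k ∧ zkk a n A k < (a:ℝ) := by
  have hdP0 : dP a n A 0 = A 0 := by rw [dP, if_pos (by omega)]
  apply fin_head_mem ha (dP_ge1 ha hge)
  · rw [hdP0]; exact xf_A0 hA hx0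
  · rw [hdP0]; exact hbd 0 (by omega)
  · omega

lemma wkk_mem (ha : 2 ≤ a) (hA : IsCanonCF x A n) (hx0 : 0 < x)
    (hge : ∀ j, 1 ≤ j → j ≤ n → 1 ≤ A j) (hAn : 1 ≤ n → 2 ≤ A n)
    (hbd : ∀ i ≤ n, A i ≤ (a:ℤ) - 1) (k : ℕ) :
    0 ≤ wkk a n A k ∧ wkk a n A k < (a:ℝ) := by
  apply fin_head_mem ha (d2_ge1 ha hge hAn)
  · by_cases hn : n = 0
    · rw [d2, if_neg (by omega), if_pos hn.symm]
      have := xf_A0' hA hx0 hn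
      subst hn
      omega
    · rw [d2, if_pos (by omega)]
      exact xf_A0 hA hx0
  · by_cases hn : n = 0
    · rw [d2, if_neg (by omega), if_pos hn.symm]
      have := hbd n le_rfl
      subst hn
      omega
    · rw [d2, if_pos (by omega)]
      have := hbd 0 (by omega)
      omega
  · omega

lemma zkk_tendsto (ha : 2 ≤ a) (hge : ∀ j, 1 ≤ j → j ≤ n → 1 ≤ A j) :
    Filter.Tendsto (zkk a n A) Filter.atTop (nhds (y1 a n A)) := by
  have hkey : ∀ k, |zkk a n A k - y1 a n A| ≤ (1/4)^k * |(a:ℝ) - tt a| := by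
    intro k
    have hcomp : zkk a n A k = tv (dP a n A) (tv (dP a n A) ((a:ℝ)) (0 + (n+1)) (2*k)) 0 (n+1) := by
      rw [zkk, show n+1+2*k = (n+1) + 2*k from rfl, tv_comp]
    set g := tv (dP a n A) ((a:ℝ)) (0 + (n+1)) (2*k) with hg
    have hpat := dP_pat a n A
    have hg1 : 1 < g := by
      by_cases hk : k = 0
      · simp only [hg, hk, Nat.mul_zero, tv_zero]; exact one_lt_aR ha
      · exact one_lt_tv_win (le_of_lt (one_lt_aR ha)) _ _ (by omega)
          (fun m h1 h2 => dP_ge1 ha hge m (by omega))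
    have hgd : |g - tt a| ≤ (1/4)^k * |(a:ℝ) - tt a| := by
      have := (per_contract ha (by simpa using hpat) k ((a:ℝ)) (le_of_lt (one_lt_aR ha))).2
      simpa [hg] using this
    have hdist := tv_dist hg1 (one_lt_tt ha) (n+1) 0 (fun m h1 => dP_ge1 ha hge m (by omega))
    rw [hcomp, y1]
    exact le_trans hdist hgd
  have h40 : Filter.Tendsto (fun k : ℕ => (1/4:ℝ)^k * |(a:ℝ) - tt a|) Filter.atTop (nhds 0) := by
    rw [show (0:ℝ) = 0 * |(a:ℝ) - tt a| from by ring]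
    exact Filter.Tendsto.mul_const _ (tendsto_pow_atTop_nhds_zero_of_lt_one (by norm_num) (by norm_num))
  rw [tendsto_iff_dist_tendsto_zero]
  apply squeeze_zero (fun k => dist_nonneg) _ h40
  intro k
  rw [Real.dist_eq]
  exact hkey k

lemma wkk_tendsto (ha : 2 ≤ a) (hge : ∀ j, 1 ≤ j → j ≤ n → 1 ≤ A j)
    (hAn : 1 ≤ n → 2 ≤ A n) :
    Filter.Tendsto (wkk a n A) Filter.atTop (nhds (y2 a n A)) := by
  have hkey : ∀ k, |wkk a n A k - y2 a n A| ≤ (1/4)^k * |(a:ℝ) - tt a| := by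
    intro k
    have hcomp : wkk a n A k = tv (d2 a n A) (tv (d2 a n A) ((a:ℝ)) (0 + (n+2)) (2*k)) 0 (n+2) := by
      rw [wkk, show n+2+2*k = (n+2) + 2*k from rfl, tv_comp]
    set g := tv (d2 a n A) ((a:ℝ)) (0 + (n+2)) (2*k) with hg
    have hpat := d2_pat a n A
    have hg1 : 1 < g := by
      by_cases hk : k = 0
      · simp only [hg, hk, Nat.mul_zero, tv_zero]; exact one_lt_aR ha
      · exact one_lt_tv_win (le_of_lt (one_lt_aR ha)) _ _ (by omega)
          (fun m h1 h2 => d2_ge1 ha hge hAn m (by omega))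
    have hgd : |g - tt a| ≤ (1/4)^k * |(a:ℝ) - tt a| := by
      have := (per_contract ha (by simpa using hpat) k ((a:ℝ)) (le_of_lt (one_lt_aR ha))).2
      simpa [hg] using this
    have hdist := tv_dist hg1 (one_lt_tt ha) (n+2) 0 (fun m h1 => d2_ge1 ha hge hAn m (by omega))
    rw [hcomp, y2]
    exact le_trans hdist hgd
  have h40 : Filter.Tendsto (fun k : ℕ => (1/4:ℝ)^k * |(a:ℝ) - tt a|) Filter.atTop (nhds 0) := by
    rw [show (0:ℝ) = 0 * |(a:ℝ) - tt a| from by ring]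
    exact Filter.Tendsto.mul_const _ (tendsto_pow_atTop_nhds_zero_of_lt_one (by norm_num) (by norm_num))
  rw [tendsto_iff_dist_tendsto_zero]
  apply squeeze_zero (fun k => dist_nonneg) _ h40
  intro k
  rw [Real.dist_eq]
  exact hkey k

end zw

/-! ### the locking interval and the core induction step -/

noncomputable def eLo (a n : ℕ) (A : ℕ → ℤ) : ℝ := ((A n : ℝ) - 1) + (1 + (tt a)⁻¹)⁻¹

noncomputable def eHi (a n : ℕ) (A : ℕ → ℤ) : ℝ := (A n : ℝ) + (tt a)⁻¹

def Qprop (a n : ℕ) (A : ℕ → ℤ) (z : ℝ) : Prop :=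
  (∀ j, j < n → pquot z j = A j) ∧ eLo a n A ≤ cfIter z n ∧ cfIter z n ≤ eHi a n A

section coreSec

variable {a n : ℕ} {A : ℕ → ℤ}

lemma tinv_mem (ha : 2 ≤ a) : 0 < (tt a)⁻¹ ∧ (tt a)⁻¹ < 1 := by
  have h := one_lt_tt ha
  exact ⟨inv_pos.2 (by linarith), inv_lt_one_of_one_lt₀ h⟩

lemma tsinv_mem (ha : 2 ≤ a) : 0 < (1 + (tt a)⁻¹)⁻¹ ∧ (1 + (tt a)⁻¹)⁻¹ < 1 := by
  have h := one_lt_ts ha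
  exact ⟨inv_pos.2 (by linarith), inv_lt_one_of_one_lt₀ h⟩

lemma eFacts (ha : 2 ≤ a) :
    ((A n : ℝ) - 1) < eLo a n A ∧ eLo a n A < (A n : ℝ) ∧
    (A n : ℝ) < eHi a n A ∧ eHi a n A < (A n : ℝ) + 1 := by
  obtain ⟨h1, h2⟩ := tinv_mem ha
  obtain ⟨h3, h4⟩ := tsinv_mem ha
  refine ⟨?_, ?_, ?_, ?_⟩
  · rw [eLo]; linarith
  · rw [eLo]; linarith
  · rw [eHi]; linarith
  · rw [eHi]; linarith

lemma eLo_pos (ha : 2 ≤ a) (hAn1 : 1 ≤ A n) : 0 < eLo a n A := by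
  obtain ⟨h3, h4⟩ := tsinv_mem ha
  rw [eLo]
  have : (1:ℝ) ≤ (A n : ℝ) := by exact_mod_cast hAn1
  linarith

lemma core (ha : 2 ≤ a) (hAn1 : 1 ≤ A n) {z : ℝ}
    (h : ∃ i, 1 ≤ i ∧ (a:ℤ) ≤ pquot z i)
    (hq : Qprop a n A (ra a z)) : Qprop a n A z := by
  classical
  obtain ⟨hq1, hq2, hq3⟩ := hq
  have hi1 : 1 ≤ Nat.find h := (Nat.find_spec h).1
  have hbig : (a:ℤ) ≤ pquot z (Nat.find h) := (Nat.find_spec h).2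
  set i := Nat.find h with hidef
  have hmin : ∀ m, 1 ≤ m → m < i → pquot z m ≤ (a:ℤ) - 1 := by
    intro m h1 h2
    have h3 := Nat.find_min h h2
    push_neg at h3
    have := h3 h1
    omega
  have hfrne : ∀ j, j < i → Int.fract (cfIter z j) ≠ 0 := by
    intro j hj hf
    have h0 : cfIter z i = 0 := iter_zero_after hf i (by omega)
    rw [pquot, h0] at hbig
    rw [Int.floor_zero] at hbig
    omega
  have hstep : ∀ j, j < i →
      cfIter z j = ((pquot z j : ℤ):ℝ) + (cfIter z (j+1))⁻¹ ∧ 1 < cfIter z (j+1) :=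
    fun j hj => gauss_step (hfrne j hj)
  have hri : (a:ℝ) ≤ cfIter z i := by
    have h1 := Int.floor_le (cfIter z i)
    have hcast : ((a:ℤ):ℝ) ≤ ((pquot z i : ℤ):ℝ) := by exact_mod_cast hbig
    rw [pquot] at hcast
    push_cast at hcast ⊢
    linarith
  set N := i - 1 with hNdef
  set dz := pquot z with hdzdef
  set ρ : ℕ → ℝ := fun j => tv dz ((dz N : ℝ)) j (N - j) with hρ
  have hρrec : ∀ j, j < N → ρ j = (dz j : ℝ) + (ρ (j+1))⁻¹ := by
    intro j hj
    simp only [hρ]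
    rw [show N - j = (N-(j+1))+1 from by omega, tv_succ]
  have hρN : ρ N = ((dz N : ℤ):ℝ) := by simp only [hρ, Nat.sub_self, tv_zero]
  have hdg1 : ∀ m, 1 ≤ m → m ≤ N → 1 ≤ dz m := by
    intro m h1 h2
    have h3 := (hstep (m-1) (by omega)).2
    rw [show m-1+1 = m from by omega] at h3
    simp only [hdzdef, pquot]
    exact Int.le_floor.2 (by push_cast; linarith)
  have hρ_ge1 : ∀ j, 1 ≤ j → j ≤ N → 1 ≤ ρ j := by
    intro j h1 h2
    simp only [hρ]
    have hwN : (1:ℝ) ≤ ((dz N : ℤ):ℝ) := by exact_mod_cast hdg1 N (by omega) le_rfl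
    exact one_le_tv_win hwN _ j (fun m hm1 hm2 => hdg1 m (by omega) (by omega))
  have hz' : ra a z = ρ 0 := by
    rw [ra_pos h]
    have hmap : (List.range (Nat.find h)).map (pquot z)
        = (List.range (N+1)).map (fun m => dz (0+m)) := by
      rw [← hidef, show i = N + 1 from by omega]
      apply List.map_congr_left
      intro m hm
      simp [hdzdef]
    rw [hmap, cfEval_range]
    simp only [hρ, Nat.zero_add, Nat.sub_zero]
  -- canonical chain data for ra a z
  have key : ∃ M, M ≤ N ∧ N ≤ M + 1 ∧ (∀ j, j ≤ M → cfIter (ra a z) j = ρ j) ∧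
      (∀ j, j < M → pquot (ra a z) j = dz j) ∧ Int.fract (cfIter (ra a z) M) = 0 := by
    by_cases hcase : dz N = 1 ∧ 1 ≤ N
    · refine ⟨N - 1, by omega, by omega, ?_⟩
      have h0 : ρ 0 = ra a z := hz'.symm
      have hrecM : ∀ j, j < N-1 → ρ j = (dz j : ℝ) + (ρ (j+1))⁻¹ :=
        fun j hj => hρrec j (by omega)
      have hgtM : ∀ j, j < N-1 → 1 < ρ (j+1) := by
        intro j hj
        rw [hρrec (j+1) (by omega)]
        have hd := hdg1 (j+1) (by omega) (by omega)
        have hp := hρ_ge1 (j+2) (by omega) (by omega)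
        have : (0:ℝ) < (ρ (j+2))⁻¹ := inv_pos.2 (by linarith)
        have : (1:ℝ) ≤ ((dz (j+1) : ℤ):ℝ) := by exact_mod_cast hd
        linarith
      have hiterM := chain_iter h0 hrecM hgtM
      refine ⟨hiterM, chain_pquot h0 hrecM hgtM, ?_⟩
      rw [hiterM (N-1) le_rfl]
      by_cases hN1 : N = 1
      · rw [show N - 1 = 0 from by omega]
        rw [hρrec 0 (by omega), show (0:ℕ)+1 = N from by omega, hρN, hcase.1]
        norm_num
      · rw [hρrec (N-1) (by omega), show N - 1 + 1 = N from by omega, hρN, hcase.1]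
        norm_num
    · refine ⟨N, le_rfl, by omega, ?_⟩
      have h0 : ρ 0 = ra a z := hz'.symm
      have hgtM : ∀ j, j < N → 1 < ρ (j+1) := by
        intro j hj
        by_cases hjN : j + 1 = N
        · rw [hjN, hρN]
          have h1 := hdg1 N (by omega) le_rfl
          have h2 : dz N ≠ 1 := fun hc => hcase ⟨hc, by omega⟩
          have : (2:ℤ) ≤ dz N := by omega
          have : (2:ℝ) ≤ ((dz N : ℤ):ℝ) := by exact_mod_cast this
          linarith
        · rw [hρrec (j+1) (by omega)]
          have hd := hdg1 (j+1) (by omega) (by omega)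
          have hp := hρ_ge1 (j+2) (by omega) (by omega)
          have : (0:ℝ) < (ρ (j+2))⁻¹ := inv_pos.2 (by linarith)
          have : (1:ℝ) ≤ ((dz (j+1) : ℤ):ℝ) := by exact_mod_cast hd
          linarith
      have hiterM := chain_iter h0 hρrec hgtM
      refine ⟨hiterM, chain_pquot h0 hρrec hgtM, ?_⟩
      rw [hiterM N le_rfl, hρN]
      exact Int.fract_intCast _
  obtain ⟨M, hMN, hNM1, hiterM, hpqM, hfrM⟩ := key
  have heLo_pos := eLo_pos ha hAn1
  have hnM : n ≤ M := by
    by_contra hcon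
    push_neg at hcon
    have h0 : cfIter (ra a z) n = 0 := iter_zero_after hfrM n hcon
    rw [h0] at hq2
    linarith
  have hnN : n ≤ N := le_trans hnM hMN
  have hni : n < i := by omega
  have hρn_lo : eLo a n A ≤ ρ n := by rw [← hiterM n hnM]; exact hq2
  have hρn_hi : ρ n ≤ eHi a n A := by rw [← hiterM n hnM]; exact hq3
  have hdzA : ∀ j, j < n → dz j = A j := by
    intro j hj
    rw [← hpqM j (by omega)]
    exact hq1 j hj
  -- useful t facts
  have ht1 := one_lt_tt ha
  have htpos := tt_pos ha
  have hts1 := one_lt_ts ha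
  have hts2 := ts_lt_two ha
  have htsinv : (1 + (tt a)⁻¹)⁻¹ = tt a - ((a:ℝ)-1) := by linarith [tt_fix ha]
  obtain ⟨e1, e2, e3, e4⟩ := eFacts (n := n) (A := A) ha
  -- the alternating chain
  have chain : ∀ q j, j = N - q → n+1 ≤ j → j ≤ N →
      ((tt a ≤ ρ j → tt a ≤ cfIter z j) ∧
       (ρ j ≤ 1 + (tt a)⁻¹ → cfIter z j ≤ 1 + (tt a)⁻¹)) := by
    intro q
    induction q with
    | zero =>
      intro j hj hj1 hj2
      have hjN : j = N := by omega
      subst hjN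
      constructor
      · intro hhyp
        exfalso
        rw [hρN] at hhyp
        have hle : dz N ≤ (a:ℤ) - 1 := hmin N (by omega) (by omega)
        have hcast : ((dz N : ℤ):ℝ) ≤ (a:ℝ) - 1 := by
          have : ((dz N : ℤ):ℝ) ≤ (((a:ℤ) - 1 : ℤ):ℝ) := by exact_mod_cast hle
          push_cast at this
          linarith
        linarith [tt_gt ha]
      · intro hhyp
        rw [hρN] at hhyp
        have hge1 : 1 ≤ dz N := hdg1 N (by omega) le_rfl
        have hdzN1 : dz N = 1 := by
          have h2 : ((dz N : ℤ):ℝ) < 2 := lt_of_le_of_lt hhyp hts2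
          have : dz N < 2 := by exact_mod_cast h2
          omega
        have hr := (hstep N (by omega)).1
        have hNi : N + 1 = i := by omega
        have hri' : (a:ℝ) ≤ cfIter z (N+1) := by rw [hNi]; exact hri
        have hinv : (cfIter z (N+1))⁻¹ ≤ (tt a)⁻¹ := by
          apply inv_anti₀ htpos
          linarith [tt_lt ha]
        rw [hr, hdzN1]
        push_cast
        linarith
    | succ q ih =>
      intro j hj hj1 hj2
      have hjlt : j < N := by omega
      have hj1N : j + 1 = N - q := by omega
      have hrecj := hρrec j hjlt
      have hρj1 : 1 ≤ ρ (j+1) := hρ_ge1 (j+1) (by omega) (by omega)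
      have hρj1pos : (0:ℝ) < ρ (j+1) := by linarith
      have hinvpos : (0:ℝ) < (ρ (j+1))⁻¹ := inv_pos.2 hρj1pos
      have hinvle1 : (ρ (j+1))⁻¹ ≤ 1 := by
        have := inv_anti₀ (by norm_num : (0:ℝ) < 1) hρj1
        simpa using this
      have hdzj_ub : dz j ≤ (a:ℤ) - 1 := hmin j (by omega) (by omega)
      have hdzj_lb : 1 ≤ dz j := hdg1 j (by omega) (by omega)
      have hdzubR : ((dz j : ℤ):ℝ) ≤ (a:ℝ) - 1 := by
        have : ((dz j : ℤ):ℝ) ≤ (((a:ℤ) - 1 : ℤ):ℝ) := by exact_mod_cast hdzj_ub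
        push_cast at this
        linarith
      have hdzlbR : (1:ℝ) ≤ ((dz j : ℤ):ℝ) := by exact_mod_cast hdzj_lb
      have hrstepj := hstep j (by omega)
      have hrj1gt : 1 < cfIter z (j+1) := hrstepj.2
      have hrj1pos : (0:ℝ) < cfIter z (j+1) := by linarith
      constructor
      · intro hhyp
        have hdzaj : dz j = (a:ℤ) - 1 := by
          have hlbR : (a:ℝ) - 2 < ((dz j : ℤ):ℝ) := by
            rw [hrecj] at hhyp
            linarith [tt_gt ha]
          have h2 : (a:ℤ) - 2 < dz j := by
            have : ((a:ℝ)) - 2 < ((dz j : ℤ):ℝ) := hlbR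
            exact_mod_cast this
          omega
        have hρj1ub : ρ (j+1) ≤ 1 + (tt a)⁻¹ := by
          rw [hrecj, hdzaj] at hhyp
          push_cast at hhyp
          have h3 : (1 + (tt a)⁻¹)⁻¹ ≤ (ρ (j+1))⁻¹ := by rw [htsinv]; linarith
          have h4 := inv_anti₀ (inv_pos.2 (by linarith : (0:ℝ) < 1 + (tt a)⁻¹)) h3
          rwa [inv_inv, inv_inv] at h4
        have hrj1ub : cfIter z (j+1) ≤ 1 + (tt a)⁻¹ :=
          (ih (j+1) hj1N (by omega) (by omega)).2 hρj1ub
        have h5 : (1 + (tt a)⁻¹)⁻¹ ≤ (cfIter z (j+1))⁻¹ := inv_anti₀ hrj1pos hrj1ub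
        rw [hrstepj.1, hdzaj]
        push_cast
        rw [htsinv] at h5
        linarith
      · intro hhyp
        have hdzj1 : dz j = 1 := by
          have : ((dz j : ℤ):ℝ) < 2 := by
            rw [hrecj] at hhyp
            linarith
          have h2 : dz j < 2 := by exact_mod_cast this
          omega
        have hρj1lb : tt a ≤ ρ (j+1) := by
          rw [hrecj, hdzj1] at hhyp
          push_cast at hhyp
          have h3 : (ρ (j+1))⁻¹ ≤ (tt a)⁻¹ := by linarith
          have h4 := inv_anti₀ hinvpos h3
          rwa [inv_inv, inv_inv] at h4
        have hrj1lb : tt a ≤ cfIter z (j+1) :=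
          (ih (j+1) hj1N (by omega) (by omega)).1 hρj1lb
        have h5 : (cfIter z (j+1))⁻¹ ≤ (tt a)⁻¹ := inv_anti₀ htpos hrj1lb
        rw [hrstepj.1, hdzj1]
        push_cast
        linarith
  -- conclusion
  have hfinal : eLo a n A ≤ cfIter z n ∧ cfIter z n ≤ eHi a n A := by
    have hrstepn := hstep n hni
    by_cases hnNeq : n = N
    · have hρn_int : ρ n = ((dz n : ℤ):ℝ) := by rw [hnNeq]; exact hρN
      have hdznA : dz n = A n := by
        have hint1 : ((A n : ℝ)) - 1 < ((dz n : ℤ):ℝ) := by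
          rw [hρn_int] at hρn_lo; linarith
        have hint2 : ((dz n : ℤ):ℝ) < (A n : ℝ) + 1 := by
          rw [hρn_int] at hρn_hi; linarith
        have i1 : A n - 1 < dz n := by exact_mod_cast hint1
        have i2 : dz n < A n + 1 := by exact_mod_cast hint2
        omega
      have hn1i : n + 1 = i := by omega
      have hrn1 : (a:ℝ) ≤ cfIter z (n+1) := by rw [hn1i]; exact hri
      have hinva : (cfIter z (n+1))⁻¹ ≤ (a:ℝ)⁻¹ :=
        inv_anti₀ (by linarith [one_lt_aR ha]) hrn1
      have hat : (a:ℝ)⁻¹ ≤ (tt a)⁻¹ := inv_anti₀ htpos (le_of_lt (tt_lt ha))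
      have hinvpos : (0:ℝ) < (cfIter z (n+1))⁻¹ := inv_pos.2 (by linarith [hrstepn.2])
      rw [hrstepn.1, hdznA]
      constructor
      · linarith
      · rw [eHi]; linarith
    · have hnltN : n < N := by omega
      have hrecn := hρrec n hnltN
      have hρn1 : 1 ≤ ρ (n+1) := hρ_ge1 (n+1) (by omega) (by omega)
      have hinvρpos : (0:ℝ) < (ρ (n+1))⁻¹ := inv_pos.2 (by linarith)
      have hinvρle1 : (ρ (n+1))⁻¹ ≤ 1 := by
        have := inv_anti₀ (by norm_num : (0:ℝ) < 1) hρn1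
        simpa using this
      have hdzn_cases : dz n = A n ∨ dz n = A n - 1 := by
        have hub : ((dz n : ℤ):ℝ) < (A n : ℝ) + 1 := by
          rw [hrecn] at hρn_hi
          linarith
        have hlb : ((A n : ℝ)) - 2 < ((dz n : ℤ):ℝ) := by
          rw [hrecn] at hρn_lo
          rw [eLo] at hρn_lo
          linarith [tsinv_mem ha]
        have i1 : dz n < A n + 1 := by exact_mod_cast hub
        have i2 : A n - 2 < dz n := by exact_mod_cast hlb
        omega
      have hrn1gt : 1 < cfIter z (n+1) := hrstepn.2
      have hrn1pos : (0:ℝ) < cfIter z (n+1) := by linarith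
      have hinvrpos : (0:ℝ) < (cfIter z (n+1))⁻¹ := inv_pos.2 hrn1pos
      rcases hdzn_cases with hc | hc
      · have hρlb : tt a ≤ ρ (n+1) := by
          rw [hrecn, hc] at hρn_hi
          rw [eHi] at hρn_hi
          have h3 : (ρ (n+1))⁻¹ ≤ (tt a)⁻¹ := by linarith
          have h4 := inv_anti₀ hinvρpos h3
          rwa [inv_inv, inv_inv] at h4
        have hr1 : tt a ≤ cfIter z (n+1) :=
          (chain (N - (n+1)) (n+1) (by omega) le_rfl (by omega)).1 hρlb
        have h5 : (cfIter z (n+1))⁻¹ ≤ (tt a)⁻¹ := inv_anti₀ htpos hr1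
        rw [hrstepn.1, hc]
        constructor
        · linarith
        · rw [eHi]; linarith
      · have hρub : ρ (n+1) ≤ 1 + (tt a)⁻¹ := by
          rw [hrecn, hc] at hρn_lo
          rw [eLo] at hρn_lo
          push_cast at hρn_lo
          have h3 : (1 + (tt a)⁻¹)⁻¹ ≤ (ρ (n+1))⁻¹ := by linarith
          have h4 := inv_anti₀ (inv_pos.2 (by linarith : (0:ℝ) < 1 + (tt a)⁻¹)) h3
          rwa [inv_inv, inv_inv] at h4
        have hr1 : cfIter z (n+1) ≤ 1 + (tt a)⁻¹ :=
          (chain (N - (n+1)) (n+1) (by omega) le_rfl (by omega)).2 hρub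
        have h5 : (1 + (tt a)⁻¹)⁻¹ ≤ (cfIter z (n+1))⁻¹ := inv_anti₀ hrn1pos hr1
        have hinvr1 : (cfIter z (n+1))⁻¹ ≤ 1 := by
          have := inv_anti₀ (by norm_num : (0:ℝ) < 1) (le_of_lt hrn1gt)
          simpa using this
        rw [hrstepn.1, hc]
        have htinv := tinv_mem ha
        constructor
        · rw [eLo]; push_cast; linarith
        · rw [eHi]; push_cast; linarith
  exact ⟨fun j hj => by rw [show pquot z j = dz j from rfl, hdzA j hj], hfinal.1, hfinal.2⟩

lemma ra_bound (ha : 2 ≤ a) {z : ℝ} (h0 : 0 ≤ z) (h1 : z < (a:ℝ))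
    (h : ∃ i, 1 ≤ i ∧ (a:ℤ) ≤ pquot z i) :
    0 ≤ ra a z ∧ ra a z ≤ (a:ℝ) := by
  classical
  have hi1 : 1 ≤ Nat.find h := (Nat.find_spec h).1
  have hbig : (a:ℤ) ≤ pquot z (Nat.find h) := (Nat.find_spec h).2
  set i := Nat.find h with hidef
  have hfrne : ∀ j, j < i → Int.fract (cfIter z j) ≠ 0 := by
    intro j hj hf
    have h0' : cfIter z i = 0 := iter_zero_after hf i (by omega)
    rw [pquot, h0'] at hbig
    rw [Int.floor_zero] at hbig
    omega
  have hstep : ∀ j, j < i →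
      cfIter z j = ((pquot z j : ℤ):ℝ) + (cfIter z (j+1))⁻¹ ∧ 1 < cfIter z (j+1) :=
    fun j hj => gauss_step (hfrne j hj)
  set N := i - 1 with hNdef
  set dz := pquot z with hdzdef
  set ρ : ℕ → ℝ := fun j => tv dz ((dz N : ℝ)) j (N - j) with hρ
  have hdg1 : ∀ m, 1 ≤ m → m ≤ N → 1 ≤ dz m := by
    intro m hm1 hm2
    have h3 := (hstep (m-1) (by omega)).2
    rw [show m-1+1 = m from by omega] at h3
    simp only [hdzdef, pquot]
    exact Int.le_floor.2 (by push_cast; linarith)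
  have hz' : ra a z = ρ 0 := by
    rw [ra_pos h]
    have hmap : (List.range (Nat.find h)).map (pquot z)
        = (List.range (N+1)).map (fun m => dz (0+m)) := by
      rw [← hidef, show i = N + 1 from by omega]
      apply List.map_congr_left
      intro m hm
      simp [hdzdef]
    rw [hmap, cfEval_range]
    simp only [hρ, Nat.zero_add, Nat.sub_zero]
  have hdz0lb : (0:ℤ) ≤ dz 0 := by
    simp only [hdzdef, pquot]
    exact Int.le_floor.2 (by rw [Int.cast_zero]; exact h0)
  have hdz0ub : dz 0 ≤ (a:ℤ) - 1 := by
    have : (⌊z⌋ : ℤ) < (a:ℤ) := Int.floor_lt.2 (by push_cast; linarith)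
    simp only [hdzdef, pquot]
    rw [show cfIter z 0 = z from rfl]
    omega
  have hdz0lbR : (0:ℝ) ≤ ((dz 0 : ℤ):ℝ) := by exact_mod_cast hdz0lb
  have hdz0ubR : ((dz 0 : ℤ):ℝ) ≤ (a:ℝ) - 1 := by
    have : ((dz 0 : ℤ):ℝ) ≤ (((a:ℤ) - 1 : ℤ):ℝ) := by exact_mod_cast hdz0ub
    push_cast at this
    linarith
  rw [hz']
  by_cases hN0 : N = 0
  · simp only [hρ, hN0, Nat.sub_self, tv_zero]
    constructor
    · simpa using hdz0lbR
    · linarith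
  · have hrec0 : ρ 0 = ((dz 0 : ℤ):ℝ) + (ρ 1)⁻¹ := by
      simp only [hρ]
      rw [show N - 0 = (N-1)+1 from by omega, tv_succ]
    have hρ1 : 1 ≤ ρ 1 := by
      simp only [hρ]
      have hwN : (1:ℝ) ≤ ((dz N : ℤ):ℝ) := by exact_mod_cast hdg1 N (by omega) le_rfl
      exact one_le_tv_win hwN _ 1 (fun m hm1 hm2 => hdg1 m (by omega) (by omega))
    have hinvpos : (0:ℝ) < (ρ 1)⁻¹ := inv_pos.2 (by linarith)
    have hinvle1 : (ρ 1)⁻¹ ≤ 1 := by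
      have := inv_anti₀ (by norm_num : (0:ℝ) < 1) hρ1
      simpa using this
    rw [hrec0]
    constructor
    · linarith
    · linarith

lemma q_between (ha : 2 ≤ a) (hAn1 : 1 ≤ A n)
    (hge : ∀ j, 1 ≤ j → j ≤ n → 1 ≤ A j) (hAn2 : 1 ≤ n → 2 ≤ A n)
    {z : ℝ} (hq : Qprop a n A z) :
    min (y2 a n A) (y1 a n A) ≤ z ∧ z ≤ max (y2 a n A) (y1 a n A) := by
  obtain ⟨hq1, hq2, hq3⟩ := hq
  have ht1 := one_lt_tt ha
  set T1 : ℕ → ℝ := fun j => tv (dP a n A) (tt a) j (n+1-j) with hT1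
  set T2 : ℕ → ℝ := fun j => tv (d2 a n A) (tt a) j (n+2-j) with hT2
  have hT1n : T1 n = eHi a n A := by
    simp only [hT1]
    rw [show n+1-n = 1 from by omega, tv_succ, tv_zero,
      show dP a n A n = A n from by rw [dP, if_pos le_rfl], eHi]
  have hT2n : T2 n = eLo a n A := by
    simp only [hT2]
    rw [show n+2-n = 2 from by omega, tv_succ, tv_succ, tv_zero,
      show d2 a n A n = A n - 1 from by rw [d2, if_neg (by omega), if_pos rfl],
      show d2 a n A (n+1) = 1 from by rw [d2, if_neg (by omega), if_neg (by omega), if_pos rfl],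
      eLo]
    push_cast
    ring
  have hT1rec : ∀ j, j < n → T1 j = ((A j : ℤ):ℝ) + (T1 (j+1))⁻¹ := by
    intro j hj
    simp only [hT1]
    rw [show n+1-j = (n+1-(j+1))+1 from by omega, tv_succ,
      show dP a n A j = A j from by rw [dP, if_pos (by omega)]]
  have hT2rec : ∀ j, j < n → T2 j = ((A j : ℤ):ℝ) + (T2 (j+1))⁻¹ := by
    intro j hj
    simp only [hT2]
    rw [show n+2-j = (n+2-(j+1))+1 from by omega, tv_succ,
      show d2 a n A j = A j from by rw [d2, if_pos (by omega)]]
  have hT1pos : ∀ j, 1 ≤ j → 1 < T1 j := by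
    intro j hj
    simp only [hT1]
    exact one_lt_tv ht1 _ j (fun m hm => dP_ge1 ha hge m (by omega))
  have hT2pos : ∀ j, 1 ≤ j → 1 < T2 j := by
    intro j hj
    simp only [hT2]
    exact one_lt_tv ht1 _ j (fun m hm => d2_ge1 ha hge hAn2 m (by omega))
  have hfr : ∀ j, j < n → Int.fract (cfIter z j) ≠ 0 := by
    intro j hj hf
    have h0 : cfIter z n = 0 := iter_zero_after hf n hj
    rw [h0] at hq2
    linarith [eLo_pos ha hAn1]
  have hmain : ∀ q j, j + q = n →
      min (T2 j) (T1 j) ≤ cfIter z j ∧ cfIter z j ≤ max (T2 j) (T1 j) := by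
    intro q
    induction q with
    | zero =>
      intro j hj
      have hjn : j = n := by omega
      subst hjn
      rw [hT1n, hT2n]
      constructor
      · exact le_trans (min_le_left _ _) hq2
      · exact le_trans hq3 (le_max_right _ _)
    | succ q ih =>
      intro j hj
      have hjn : j < n := by omega
      have hgs := gauss_step (hfr j hjn)
      have hpq : pquot z j = A j := hq1 j hjn
      have hrj : cfIter z j = ((A j : ℤ):ℝ) + (cfIter z (j+1))⁻¹ := by
        rw [hgs.1, hpq]
      have hih := ih (j+1) (by omega)
      have h1p : (0:ℝ) < T1 (j+1) := by linarith [hT1pos (j+1) (by omega)]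
      have h2p : (0:ℝ) < T2 (j+1) := by linarith [hT2pos (j+1) (by omega)]
      have hrp : (0:ℝ) < cfIter z (j+1) := by linarith [hgs.2]
      rw [hrj, hT1rec j hjn, hT2rec j hjn]
      rcases le_total (T2 (j+1)) (T1 (j+1)) with hcmp | hcmp
      · rw [min_eq_left hcmp, max_eq_right hcmp] at hih
        have hu : (cfIter z (j+1))⁻¹ ≤ (T2 (j+1))⁻¹ := inv_anti₀ h2p hih.1
        have hl : (T1 (j+1))⁻¹ ≤ (cfIter z (j+1))⁻¹ := inv_anti₀ hrp hih.2
        constructor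
        · exact le_trans (min_le_right _ _) (by linarith)
        · exact le_trans (by linarith) (le_max_left _ _)
      · rw [min_eq_right hcmp, max_eq_left hcmp] at hih
        have hu : (cfIter z (j+1))⁻¹ ≤ (T1 (j+1))⁻¹ := inv_anti₀ h1p hih.1
        have hl : (T2 (j+1))⁻¹ ≤ (cfIter z (j+1))⁻¹ := inv_anti₀ hrp hih.2
        constructor
        · exact le_trans (min_le_left _ _) (by linarith)
        · exact le_trans (by linarith) (le_max_right _ _)
  have hfin := hmain n 0 (by omega)
  have hz0 : cfIter z 0 = z := rfl
  have hT10 : T1 0 = y1 a n A := by simp only [hT1, Nat.sub_zero]; rfl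
  have hT20 : T2 0 = y2 a n A := by simp only [hT2, Nat.sub_zero]; rfl
  rw [hz0, hT10, hT20] at hfin
  exact hfin

end coreSec

end S12

/-- The boundaries of the attraction basin of a rational
`p/q = [a₀; …, aₙ]` (all quotients `≤ a - 1`) are the quadratic irrationals
`[a₀; …, aₙ, a-1, 1, a-1, 1, …]` and `[a₀; …, aₙ - 1, 1, a-1, 1, a-1, 1, …]`. -/
theorem stmt_12 (a : ℕ) (ha : 2 ≤ a) (x : ℚ) (hx0 : 0 < (x : ℝ)) (hxa : (x : ℝ) < a)
    (n : ℕ) (A : ℕ → ℤ) (hA : IsCanonCF (x : ℝ) A n)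
    (hbd : ∀ i ≤ n, A i ≤ (a : ℤ) - 1) :
    let basin : Set ℝ := {z | z ∈ Set.Ico (0 : ℝ) (a : ℝ) ∧ ∃ k : ℕ, (ra a)^[k] z = (x : ℝ)}
    ∃ y₁ y₂ : ℝ,
      (∀ i, pquot y₁ i =
        if i ≤ n then A i else if Odd (i - n) then (a : ℤ) - 1 else 1) ∧
      (∀ i, pquot y₂ i =
        if i < n then A i else if i = n then A n - 1 else if i = n + 1 then 1
        else if Even (i - n) then (a : ℤ) - 1 else 1) ∧
      Irrational y₁ ∧ (∃ c b d : ℤ, c ≠ 0 ∧ (c : ℝ) * y₁ ^ 2 + b * y₁ + d = 0) ∧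
      Irrational y₂ ∧ (∃ c b d : ℤ, c ≠ 0 ∧ (c : ℝ) * y₂ ^ 2 + b * y₂ + d = 0) ∧
      ((sSup basin = y₁ ∧ sInf basin = y₂) ∨ (sSup basin = y₂ ∧ sInf basin = y₁)) := by
  intro basin
  classical
  have hge : ∀ j, 1 ≤ j → j ≤ n → 1 ≤ A j := fun j h1 h2 => S12.xf_digit_ge hA h1 h2
  have hAn2 : 1 ≤ n → 2 ≤ A n := fun hn => S12.xf_last_ge hA hn
  have hAn1 : 1 ≤ A n := by
    rcases Nat.eq_zero_or_pos n with hn | hn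
    · subst hn; exact S12.xf_A0' hA hx0 rfl
    · have := hAn2 hn; omega
  set y₁ := S12.y1 a n A with hy1def
  set y₂ := S12.y2 a n A with hy2def
  have hy1pq := (S12.y1_chain ha hge).2
  have hy2pq := (S12.y2_chain ha hge hAn2).2
  -- quadratic irrationality
  obtain ⟨u1, v1, hv1, hval1⟩ := S12.tv_quad ha (S12.dP a n A) (n+1) 0 0 1 one_ne_zero
  have hcast01 : (((0:ℚ)):ℝ) + (((1:ℚ)):ℝ) * S12.tt a = S12.tt a := by push_cast; ring
  have hy1aff : y₁ = (u1:ℝ) + (v1:ℝ) * S12.tt a := by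
    rw [hy1def, S12.y1]
    nth_rewrite 1 [← hcast01]
    exact hval1
  obtain ⟨u2, v2, hv2, hval2⟩ := S12.tv_quad ha (S12.d2 a n A) (n+2) 0 0 1 one_ne_zero
  have hy2aff : y₂ = (u2:ℝ) + (v2:ℝ) * S12.tt a := by
    rw [hy2def, S12.y2]
    nth_rewrite 1 [← hcast01]
    exact hval2
  -- the outer induction: every basin point satisfies Qprop
  have houter : ∀ k, ∀ w : ℝ, 0 ≤ w → w < (a:ℝ) → (ra a)^[k] w = (x:ℝ) →
      S12.Qprop a n A w := by
    intro k
    induction k with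
    | zero =>
      intro w h0 h1 hit
      rw [Function.iterate_zero_apply] at hit
      subst hit
      obtain ⟨e1, e2, e3, e4⟩ := S12.eFacts (a := a) (n := n) (A := A) ha
      refine ⟨fun j hj => hA.1 j (by omega), ?_, ?_⟩
      · rw [S12.xf_last hA]; linarith
      · rw [S12.xf_last hA]; linarith
    | succ k ih =>
      intro w h0 h1 hit
      rw [Function.iterate_succ_apply] at hit
      by_cases hex : ∃ i, 1 ≤ i ∧ (a:ℤ) ≤ pquot w i
      · have hmem := S12.ra_bound ha h0 h1 hex
        have hne : ra a w ≠ (a:ℝ) := by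
          intro heq
          rw [heq] at hit
          have hfix : ra a ((a:ℝ)) = (a:ℝ) := by
            have h := S12.ra_int ha ((a:ℕ):ℤ)
            push_cast at h
            exact h
          have hiter : (ra a)^[k] ((a:ℝ)) = (a:ℝ) := Function.iterate_fixed hfix k
          rw [hiter] at hit
          have := hxa
          rw [← hit] at this
          exact lt_irrefl _ this
        exact S12.core ha hAn1 hex (ih (ra a w) hmem.1 (lt_of_le_of_ne hmem.2 hne) hit)
      · rw [S12.ra_neg hex] at hit
        exact ih w h0 h1 hit
  have hsub : ∀ w ∈ basin, min y₂ y₁ ≤ w ∧ w ≤ max y₂ y₁ := by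
    rintro w ⟨⟨h0, h1⟩, k, hk⟩
    exact S12.q_between ha hAn1 hge hAn2 (houter k w h0 h1 hk)
  have hxmem : (x:ℝ) ∈ basin := ⟨⟨le_of_lt hx0, hxa⟩, 0, rfl⟩
  have hnemp : basin.Nonempty := ⟨(x:ℝ), hxmem⟩
  have hbddA : BddAbove basin := ⟨max y₂ y₁, fun w hw => (hsub w hw).2⟩
  have hbddB : BddBelow basin := ⟨min y₂ y₁, fun w hw => (hsub w hw).1⟩
  have hzmem : ∀ k, S12.zkk a n A k ∈ basin := fun k =>
    ⟨⟨(S12.zkk_mem ha hA hx0 hge hbd k).1, (S12.zkk_mem ha hA hx0 hge hbd k).2⟩,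
      k+1, S12.zkk_basin ha hA hge hbd k⟩
  have hwmem : ∀ k, S12.wkk a n A k ∈ basin := fun k =>
    ⟨⟨(S12.wkk_mem ha hA hx0 hge hAn2 hbd k).1, (S12.wkk_mem ha hA hx0 hge hAn2 hbd k).2⟩,
      k+1, S12.wkk_basin ha hA hge hAn2 hbd k⟩
  have hy1le : y₁ ≤ sSup basin :=
    le_of_tendsto (S12.zkk_tendsto ha hge)
      (Filter.Eventually.of_forall (fun k => le_csSup hbddA (hzmem k)))
  have hy2le : y₂ ≤ sSup basin :=
    le_of_tendsto (S12.wkk_tendsto ha hge hAn2)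
      (Filter.Eventually.of_forall (fun k => le_csSup hbddA (hwmem k)))
  have hle1 : sInf basin ≤ y₁ :=
    ge_of_tendsto (S12.zkk_tendsto ha hge)
      (Filter.Eventually.of_forall (fun k => csInf_le hbddB (hzmem k)))
  have hle2 : sInf basin ≤ y₂ :=
    ge_of_tendsto (S12.wkk_tendsto ha hge hAn2)
      (Filter.Eventually.of_forall (fun k => csInf_le hbddB (hwmem k)))
  have hsup : sSup basin = max y₂ y₁ :=
    le_antisymm (csSup_le hnemp (fun w hw => (hsub w hw).2)) (max_le hy2le hy1le)
  have hinf : sInf basin = min y₂ y₁ :=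
    le_antisymm (le_min hle2 hle1) (le_csInf hnemp (fun w hw => (hsub w hw).1))
  refine ⟨y₁, y₂, ?_, ?_, ?_, ?_, ?_, ?_, ?_⟩
  · intro i
    rw [hy1pq i]
    rfl
  · intro i
    rw [hy2pq i]
    rfl
  · exact S12.affine_irrational ha hv1 hy1aff
  · exact S12.affine_quad ha hv1 hy1aff
  · exact S12.affine_irrational ha hv2 hy2aff
  · exact S12.affine_quad ha hv2 hy2aff
  · rcases le_total y₁ y₂ with hcmp | hcmp
    · right
      exact ⟨by rw [hsup, max_eq_left hcmp], by rw [hinf, min_eq_right hcmp]⟩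
    · left
      exact ⟨by rw [hsup, max_eq_right hcmp], by rw [hinf, min_eq_left hcmp]⟩
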